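/- arXiv:2308.06852 — 6 statements merged into one kernel-verified Lean document; each statement's English description precedes it below -/
import Mathlib

section
/- Let (R,V) be a generalized root system and let α ∈ R be a primitive root. Then there exists a base S of R such that α ∈ S. -/
open scoped RealInnerProductSpace

variable {V : Type*} [NormedAddCommGroup V] [InnerProductSpace ℝ V] [FiniteDimensional ℝ V]

/-- A generalized root system: `R` is a nonempty finite spanning set such that for
`α, β ∈ R`: `⟪α,β⟫ < 0` implies `α+β ∈ R`; `⟪α,β⟫ > 0` implies `α-β ∈ R`; and
`⟪α,β⟫ = 0` implies `α+β ∈ R ↔ α-β ∈ R`. -/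
def IsGRS (R : Set V) : Prop :=
  R.Nonempty ∧ R.Finite ∧ Submodule.span ℝ R = ⊤ ∧
    ∀ α ∈ R, ∀ β ∈ R,
      (⟪α, β⟫ < 0 → α + β ∈ R) ∧
      (0 < ⟪α, β⟫ → α - β ∈ R) ∧
      (⟪α, β⟫ = 0 → (α + β ∈ R ↔ α - β ∈ R))

/-- `v` is a linear combination of elements of `S` with nonnegative integer coefficients. -/
def IsNonnegIntComb (S : Set V) (v : V) : Prop :=
  ∃ c : V →₀ ℤ, ↑c.support ⊆ S ∧ (∀ α, 0 ≤ c α) ∧ v = c.sum fun α n => (n : ℝ) • α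

/-- A base of a GRS `R`: a subset of `R` which is a vector-space basis of `V` such that
every root is a linear combination of `S` with coefficients all nonnegative integers or
all nonpositive integers. -/
def IsBase (R S : Set V) : Prop :=
  S ⊆ R ∧ LinearIndependent ℝ ((↑) : S → V) ∧ Submodule.span ℝ S = ⊤ ∧
    ∀ β ∈ R, IsNonnegIntComb S β ∨ IsNonnegIntComb S (-β)

/-- `R⁺(S)`: the roots whose coefficients in `S` are all nonnegative integers. -/
def posRoots (R S : Set V) : Set V := {β ∈ R | IsNonnegIntComb S β}

/-- The partial order `≺_S`: `x ≺_S y` iff `y - x` is a nonnegative integer combination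
of `S`. -/
def prec (S : Set V) (x y : V) : Prop := IsNonnegIntComb S (y - x)

/-- `β` is indecomposable in `P`: `β ∈ P` and `β` is not the sum of two nonzero
elements of `P`. -/
def IsIndecomposableIn (P : Set V) (β : V) : Prop :=
  β ∈ P ∧ ¬∃ γ ∈ P, ∃ δ ∈ P, γ ≠ 0 ∧ δ ≠ 0 ∧ β = γ + δ

/-- A positive system of `R`. -/
def IsPositiveSystem (R P : Set V) : Prop :=
  P ⊆ R ∧ (∀ α ∈ P, ∀ β ∈ P, α + β ∈ R → α + β ∈ P) ∧ R = P ∪ -P ∧ P ∩ -P = {0}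

/-- Irreducibility of a GRS. -/
def IsIrreducibleGRS (R : Set V) : Prop :=
  ∀ R₁ R₂ : Set V, R = R₁ ∪ R₂ → (∀ α ∈ R₁, ∀ β ∈ R₂, ⟪α, β⟫ = 0) →
    R₁ ⊆ {0} ∨ R₂ ⊆ {0}

/-- A primitive root of `R`. -/
def IsPrimitive (R : Set V) (α : V) : Prop :=
  α ∈ R ∧ α ≠ 0 ∧ ∀ (k : ℤ) (α' : V), 0 < k → α' ∈ R → α = (k : ℝ) • α' → k = 1

/-- The orthogonal projection `π_I` of `V` onto the orthogonal complement of the span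
of `I`. -/
noncomputable def projAway (I : Set V) : V → ↥((Submodule.span ℝ I)ᗮ) :=
  fun v => Submodule.orthogonalProjectionOnto ((Submodule.span ℝ I)ᗮ) v

/-- A root system. -/
def IsRootSystem (Δ : Set V) : Prop :=
  Δ.Finite ∧ (0 : V) ∉ Δ ∧ Submodule.span ℝ Δ = ⊤ ∧
    ∀ α ∈ Δ, ∀ β ∈ Δ,
      (β - (2 * ⟪β, α⟫ / ⟪α, α⟫) • α ∈ Δ) ∧
      (∃ n : ℤ, 2 * ⟪β, α⟫ / ⟪α, α⟫ = (n : ℝ)) ∧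
      ∀ t : ℝ, t • α ∈ Δ → t = 1 ∨ t = -1

section AuxStmt2

set_option linter.unusedSectionVars false
set_option linter.unusedVariables false

lemma obtuse_linearIndependent {S : Set V} (u : V)
    (hpos : ∀ γ ∈ S, 0 < ⟪u, γ⟫)
    (hobtuse : ∀ γ ∈ S, ∀ δ ∈ S, γ ≠ δ → ⟪γ, δ⟫ ≤ 0) :
    LinearIndependent ℝ ((↑) : S → V) := by
  rw [show ((↑) : S → V) = (fun x => x : S → V) from rfl, linearIndependent_subtype_iff, linearIndepOn_iff]
  intro l hl hl0
  rw [Finsupp.mem_supported] at hl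
  classical
  rw [Finsupp.linearCombination_apply, Finsupp.sum] at hl0
  simp only [id] at hl0
  set p := l.support.filter (fun γ => 0 < l γ) with hp
  set n := l.support.filter (fun γ => l γ < 0) with hn
  have hdisj : Disjoint p n := by
    rw [Finset.disjoint_left]
    intro γ hγ hγ'
    exact absurd ((Finset.mem_filter.mp hγ).2.trans (Finset.mem_filter.mp hγ').2) (lt_irrefl _)
  have hpS : ∀ γ ∈ p, γ ∈ S := fun γ h => hl (Finset.mem_filter.mp h).1
  have hnS : ∀ γ ∈ n, γ ∈ S := fun γ h => hl (Finset.mem_filter.mp h).1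
  have hppos : ∀ γ ∈ p, 0 < l γ := fun γ h => (Finset.mem_filter.mp h).2
  have hnneg : ∀ γ ∈ n, l γ < 0 := fun γ h => (Finset.mem_filter.mp h).2
  have hsupp : l.support = p ∪ n := by
    ext γ
    simp only [hp, hn, Finset.mem_union, Finset.mem_filter]
    constructor
    · intro h
      rcases lt_or_gt_of_ne (Finsupp.mem_support_iff.mp h) with h' | h'
      · exact Or.inr ⟨h, h'⟩
      · exact Or.inl ⟨h, h'⟩
    · rintro (h | h) <;> exact h.1
  have hv : (∑ γ ∈ p, l γ • γ) + (∑ γ ∈ n, l γ • γ) = 0 := by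
    rw [← Finset.sum_union hdisj, ← hsupp, hl0]
  set v := ∑ γ ∈ p, l γ • γ with hvdef
  have hveq : v = ∑ γ ∈ n, (-(l γ)) • γ := by
    simp only [neg_smul]
    rw [Finset.sum_neg_distrib]
    exact eq_neg_of_add_eq_zero_left hv
  have hvv : ⟪v, v⟫ ≤ 0 := by
    rw [show (⟪v, v⟫ : ℝ) = ⟪∑ γ ∈ p, l γ • γ, ∑ γ ∈ n, (-(l γ)) • γ⟫ from by
      rw [← hvdef, ← hveq]]
    rw [sum_inner]
    apply Finset.sum_nonpos
    intro γ hγ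
    rw [real_inner_smul_left, inner_sum]
    apply mul_nonpos_of_nonneg_of_nonpos (le_of_lt (hppos γ hγ))
    apply Finset.sum_nonpos
    intro δ hδ
    rw [real_inner_smul_right]
    have hne : γ ≠ δ := by
      rintro rfl
      exact absurd hγ (Finset.disjoint_left.mp hdisj · hδ)
    exact mul_nonpos_of_nonneg_of_nonpos (by linarith [hnneg δ hδ])
      (hobtuse γ (hpS γ hγ) δ (hnS δ hδ) hne)
  have hv0 : v = 0 := real_inner_self_nonpos.mp hvv
  have hpe : p = ∅ := by
    by_contra hne
    have : 0 < ⟪u, v⟫ := by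
      rw [hvdef, inner_sum]
      apply Finset.sum_pos
      · intro γ hγ
        rw [real_inner_smul_right]
        exact mul_pos (hppos γ hγ) (hpos γ (hpS γ hγ))
      · exact Finset.nonempty_of_ne_empty hne
    rw [hv0, inner_zero_right] at this
    exact lt_irrefl _ this
  have hne' : n = ∅ := by
    by_contra hne
    have : 0 < ⟪u, v⟫ := by
      rw [hveq, inner_sum]
      apply Finset.sum_pos
      · intro γ hγ
        rw [real_inner_smul_right]
        exact mul_pos (by linarith [hnneg γ hγ]) (hpos γ (hnS γ hγ))
      · exact Finset.nonempty_of_ne_empty hne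
    rw [hv0, inner_zero_right] at this
    exact lt_irrefl _ this
  rw [← Finsupp.support_eq_empty, hsupp, hpe, hne', Finset.empty_union]

lemma exists_generic (R : Set V) (hfin : R.Finite) (α : V) (hα0 : α ≠ 0) :
    ∃ w : V, ⟪w, α⟫ = 0 ∧ ∀ β ∈ R, (¬∃ t : ℝ, β = t • α) → ⟪w, β⟫ ≠ 0 := by
  classical
  set U : Submodule ℝ V := (ℝ ∙ α)ᗮ with hU
  set B : Set V := {β ∈ R | ¬∃ t : ℝ, β = t • α} with hB
  have hBfin : B.Finite := hfin.subset (Set.sep_subset _ _)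
  have : Finite ↥B := hBfin.to_subtype
  by_contra h
  push_neg at h
  -- for every w with ⟪w,α⟫ = 0, there is β ∈ B with ⟪w,β⟫ = 0
  have hcov : ∀ w : ↥U, ∃ β : ↥B, ⟪(β : V), (w : V)⟫ = 0 := by
    intro w
    have hwα : ⟪(w : V), α⟫ = 0 := by
      have hw2 : (w : V) ∈ (Submodule.span ℝ {α})ᗮ := w.2
      rw [Submodule.mem_orthogonal] at hw2
      rw [real_inner_comm]
      exact hw2 α (Submodule.mem_span_singleton_self α)
    obtain ⟨β, hβR, hβt, hβ0⟩ := h w hwα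
    exact ⟨⟨β, ⟨hβR, by push_neg; exact hβt⟩⟩, by rw [real_inner_comm]; exact hβ0⟩
  set q : ↥B → Subspace ℝ ↥U := fun β =>
    LinearMap.ker ((innerₛₗ ℝ (β : V)).comp U.subtype) with hq
  have hcov' : ⋃ β : ↥B, ((q β : Set ↥U)) = Set.univ := by
    rw [Set.eq_univ_iff_forall]
    intro w
    obtain ⟨β, hβ⟩ := hcov w
    exact Set.mem_iUnion.mpr ⟨β, by
      simp only [hq, SetLike.mem_coe, LinearMap.mem_ker, LinearMap.comp_apply,
        Submodule.subtype_apply, innerₛₗ_apply_apply]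
      exact hβ⟩
  obtain ⟨β, hβtop⟩ := Subspace.exists_eq_top_of_iUnion_eq_univ hcov'
  -- so β is orthogonal to all of U, hence β ∈ Uᗮ = ℝ ∙ α
  have hβmem : (β : V) ∈ Uᗮ := by
    rw [Submodule.mem_orthogonal']
    intro u hu
    have : (⟨u, hu⟩ : ↥U) ∈ q β := hβtop ▸ Submodule.mem_top
    simpa only [hq, LinearMap.mem_ker, LinearMap.comp_apply, Submodule.subtype_apply,
      innerₛₗ_apply_apply] using this
  rw [hU, Submodule.orthogonal_orthogonal] at hβmem
  obtain ⟨t, ht⟩ := Submodule.mem_span_singleton.mp hβmem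
  exact β.2.2 ⟨t, ht.symm⟩

lemma primitive_multiples (R : Set V) (hR : IsGRS R) (α : V) (hα : IsPrimitive R α) :
    ∀ t : ℝ, 0 < t → t • α ∈ R → ∃ n : ℕ, 1 ≤ n ∧ t = n := by
  classical
  obtain ⟨hαR, hα0, hprim⟩ := hα
  obtain ⟨-, hfin, -, hax⟩ := hR
  have hαα : (0:ℝ) < ⟪α, α⟫ := lt_of_le_of_ne real_inner_self_nonneg (Ne.symm (inner_self_ne_zero.mpr hα0))
  set T : Set ℝ := {t : ℝ | 0 < t ∧ t • α ∈ R} with hT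
  have hTfin : T.Finite := by
    have hinj : Function.Injective (fun t : ℝ => t • α) := fun s t h => by
      by_contra hne
      exact hα0 (by
        have := sub_eq_zero.mpr h
        rw [← sub_smul] at this
        exact (smul_eq_zero.mp this).resolve_left (sub_ne_zero.mpr hne))
    have : T ⊆ (fun t : ℝ => t • α) ⁻¹' R := fun t ht => ht.2
    exact Set.Finite.subset (Set.Finite.preimage hinj.injOn hfin) this
  have h1T : (1:ℝ) ∈ T := ⟨one_pos, by rwa [one_smul]⟩
  -- closure under differences
  have hclose : ∀ t ∈ T, ∀ s ∈ T, s < t → t - s ∈ T := by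
    rintro t ⟨ht0, htR⟩ s ⟨hs0, hsR⟩ hst
    refine ⟨by linarith, ?_⟩
    have hip : (0:ℝ) < ⟪t • α, s • α⟫ := by
      rw [real_inner_smul_left, real_inner_smul_right]
      positivity
    have := (hax _ htR _ hsR).2.1 hip
    rwa [← sub_smul] at this
  -- minimum of T
  obtain ⟨t₀, ht₀T, ht₀min⟩ : ∃ t₀ ∈ T, ∀ t ∈ T, t₀ ≤ t := by
    obtain ⟨t₀, ht₀T, ht₀min⟩ := Set.exists_min_image T id hTfin ⟨1, h1T⟩
    exact ⟨t₀, ht₀T, ht₀min⟩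
  have ht₀0 : 0 < t₀ := ht₀T.1
  -- Euclid
  have heuclid : ∀ n : ℕ, ∀ t ∈ T, t ≤ n * t₀ → ∃ m : ℕ, t = m * t₀ := by
    intro n
    induction n with
    | zero => intro t ht hle; exact absurd hle (by push_neg; simpa using ht.1)
    | succ n ih =>
      intro t ht hle
      rcases eq_or_lt_of_le (ht₀min t ht) with heq | hlt
      · exact ⟨1, by rw [Nat.cast_one, one_mul, heq]⟩
      · obtain ⟨m, hm⟩ := ih (t - t₀) (hclose t ht t₀ ht₀T hlt) (by push_cast at hle ⊢; linarith)
        exact ⟨m + 1, by push_cast; linarith⟩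
  -- t₀ = 1
  obtain ⟨n1, hn1⟩ : ∃ m : ℕ, (1:ℝ) = m * t₀ := by
    obtain ⟨n, hn⟩ := exists_nat_ge (1 / t₀)
    refine heuclid n 1 h1T ?_
    rw [div_le_iff₀ ht₀0] at hn
    linarith
  have hn1pos : 0 < n1 := by
    by_contra h
    push_neg at h
    interval_cases n1
    simp at hn1
  have ht₀1 : t₀ = 1 := by
    have hmem : t₀ • α ∈ R := ht₀T.2
    have : α = ((n1 : ℤ) : ℝ) • (t₀ • α) := by
      rw [smul_smul]
      push_cast
      rw [← hn1, one_smul]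
    have := hprim n1 (t₀ • α) (by exact_mod_cast hn1pos) hmem this
    have hn11 : n1 = 1 := by exact_mod_cast this
    rw [hn11] at hn1
    push_cast at hn1
    linarith
  intro t ht htR
  obtain ⟨n, hn⟩ : ∃ m : ℕ, t = m * t₀ := by
    obtain ⟨N, hN⟩ := exists_nat_ge (t / t₀)
    refine heuclid N t ⟨ht, htR⟩ ?_
    rw [div_le_iff₀ ht₀0] at hN
    linarith
  refine ⟨n, ?_, by rw [hn, ht₀1, mul_one]⟩
  by_contra h
  push_neg at h
  interval_cases n
  rw [ht₀1] at hn
  simp at hn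
  linarith

end AuxStmt2

/-- Every primitive root belongs to some base. -/
theorem stmt2 (R : Set V) (hR : IsGRS R) (α : V) (hα : IsPrimitive R α) :
    ∃ S : Set V, IsBase R S ∧ α ∈ S := by
  classical
  obtain ⟨hαR, hα0, hprim⟩ := hα
  obtain ⟨hne, hfin, hspan, hax⟩ := hR
  have hαα : (0:ℝ) < ⟪α, α⟫ :=
    lt_of_le_of_ne real_inner_self_nonneg (Ne.symm (inner_self_ne_zero.mpr hα0))
  have h0R : (0:V) ∈ R := by
    have := (hax α hαR α hαR).2.1 hαα
    simpa using this
  have hneg : ∀ β ∈ R, -β ∈ R := by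
    intro β hβ
    have h := (hax 0 h0R β hβ).2.2 (by simp)
    have h1 : (0:V) + β ∈ R := by simpa using hβ
    have := h.mp h1
    simpa using this
  have hmult := primitive_multiples R ⟨hne, hfin, hspan, hax⟩ α ⟨hαR, hα0, hprim⟩
  obtain ⟨w, hwα, hw⟩ := exists_generic R hfin α hα0
  set B : Set V := {β ∈ R | ¬∃ t : ℝ, β = t • α} with hB
  have hBfin : B.Finite := hfin.subset (Set.sep_subset _ _)
  set c : V → ℝ := fun β => |⟪w, β⟫| / (|⟪α, β⟫| + ⟪α, α⟫) with hc
  set Bc : Finset ℝ := insert 1 (hBfin.toFinset.image c) with hBc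
  have hBcne : Bc.Nonempty := ⟨1, Finset.mem_insert_self _ _⟩
  set ε : ℝ := Bc.min' hBcne / 2 with hε
  have hcpos : ∀ β ∈ B, 0 < c β := by
    intro β hβ
    apply div_pos (abs_pos.mpr (hw β hβ.1 hβ.2))
    exact add_pos_of_nonneg_of_pos (abs_nonneg _) hαα
  have hminpos : 0 < Bc.min' hBcne := by
    have h := Bc.min'_mem hBcne
    rcases Finset.mem_insert.mp h with h | h
    · exact lt_of_lt_of_eq one_pos h.symm
    · obtain ⟨β, hβ, hcβ⟩ := Finset.mem_image.mp h
      rw [← hcβ]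
      exact hcpos β (hBfin.mem_toFinset.mp hβ)
  have hεpos : 0 < ε := by rw [hε]; linarith
  have hεlt : ∀ β ∈ B, ε * (|⟪α, β⟫| + ⟪α, α⟫) < |⟪w, β⟫| := by
    intro β hβ
    have h1 : Bc.min' hBcne ≤ c β :=
      Finset.min'_le _ _ (Finset.mem_insert_of_mem
        (Finset.mem_image_of_mem c (hBfin.mem_toFinset.mpr hβ)))
    have h2 : ε < c β := by rw [hε]; linarith
    have hD : 0 < |⟪α, β⟫| + ⟪α, α⟫ := add_pos_of_nonneg_of_pos (abs_nonneg _) hαα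
    calc ε * (|⟪α, β⟫| + ⟪α, α⟫) < c β * (|⟪α, β⟫| + ⟪α, α⟫) :=
          mul_lt_mul_of_pos_right h2 hD
      _ = |⟪w, β⟫| := div_mul_cancel₀ _ (ne_of_gt hD)
  set u : V := w + ε • α with hu
  have hfα : ⟪u, α⟫ = ε * ⟪α, α⟫ := by
    rw [hu, inner_add_left, real_inner_smul_left, hwα, zero_add]
  have hfαpos : 0 < ⟪u, α⟫ := by rw [hfα]; positivity
  have hfmult : ∀ t : ℝ, ⟪u, t • α⟫ = t * (ε * ⟪α, α⟫) := by
    intro t; rw [real_inner_smul_right, hfα]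
  have hfB : ∀ β ∈ B, ⟪u, β⟫ = ⟪w, β⟫ + ε * ⟪α, β⟫ := by
    intro β hβ; rw [hu, inner_add_left, real_inner_smul_left]
  -- bounds for β ∈ B
  have habs : ∀ β : V, ε * ⟪α, β⟫ ≤ ε * |⟪α, β⟫| ∧ -(ε * |⟪α, β⟫|) ≤ ε * ⟪α, β⟫ := by
    intro β
    constructor
    · exact mul_le_mul_of_nonneg_left (le_abs_self _) hεpos.le
    · rw [neg_le, ← mul_neg]
      exact mul_le_mul_of_nonneg_left (neg_le.mpr (neg_abs_le _)) hεpos.le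
  have hBne0 : ∀ β ∈ B, ⟪u, β⟫ ≠ 0 := by
    intro β hβ
    have h1 := hεlt β hβ
    have h2 := hfB β hβ
    have h3 := habs β
    have hεα : 0 ≤ ε * ⟪α, α⟫ := by positivity
    rcases abs_cases (⟪w, β⟫ : ℝ) with ⟨he, _⟩ | ⟨he, _⟩ <;>
      · intro h0; rw [h2] at h0; nlinarith [abs_nonneg (⟪α, β⟫ : ℝ)]
  have hBgt : ∀ β ∈ B, 0 < ⟪u, β⟫ → ε * ⟪α, α⟫ < ⟪u, β⟫ := by
    intro β hβ hpos
    have h1 := hεlt β hβ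
    have h2 := hfB β hβ
    have h3 := habs β
    have hεα : 0 < ε * ⟪α, α⟫ := by positivity
    rcases abs_cases (⟪w, β⟫ : ℝ) with ⟨he, _⟩ | ⟨he, _⟩
    · nlinarith
    · exfalso; nlinarith
  set P : Set V := {β ∈ R | 0 < ⟪u, β⟫} with hP
  have hPsub : P ⊆ R := Set.sep_subset _ _
  have hkey : ∀ β ∈ P, ε * ⟪α, α⟫ ≤ ⟪u, β⟫ := by
    rintro β ⟨hβR, hβpos⟩
    by_cases hex : ∃ t : ℝ, β = t • α
    · obtain ⟨t, rfl⟩ := hex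
      rw [hfmult] at hβpos ⊢
      have hεα : 0 < ε * ⟪α, α⟫ := by positivity
      have ht : 0 < t := by nlinarith
      obtain ⟨n, hn1, hnt⟩ := hmult t ht hβR
      have ht1 : (1:ℝ) ≤ t := by rw [hnt]; exact_mod_cast hn1
      nlinarith
    · exact (hBgt β ⟨hβR, hex⟩ hβpos).le
  have hαP : α ∈ P := ⟨hαR, hfαpos⟩
  have h0P : (0:V) ∉ P := fun h => absurd h.2 (by simp)
  have htrich : ∀ β ∈ R, β ≠ 0 → β ∈ P ∨ -β ∈ P := by
    intro β hβR hβ0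
    have hβne : ⟪u, β⟫ ≠ 0 := by
      by_cases hex : ∃ t : ℝ, β = t • α
      · obtain ⟨t, rfl⟩ := hex
        rw [hfmult]
        have ht0 : t ≠ 0 := fun h => hβ0 (by rw [h, zero_smul])
        have hεα : 0 < ε * ⟪α, α⟫ := by positivity
        exact mul_ne_zero ht0 (ne_of_gt hεα)
      · exact hBne0 β ⟨hβR, hex⟩
    rcases lt_or_gt_of_ne hβne with h | h
    · right
      refine ⟨hneg β hβR, ?_⟩
      rw [inner_neg_right]
      linarith
    · exact Or.inl ⟨hβR, h⟩
  set S : Set V := {β ∈ P | ¬∃ γ ∈ P, ∃ δ ∈ P, β = γ + δ} with hS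
  have hSsubP : S ⊆ P := Set.sep_subset _ _
  have hSsubR : S ⊆ R := fun β hβ => hPsub (hSsubP hβ)
  have hPfin : P.Finite := hfin.subset hPsub
  -- every element of P is a nonnegative integral combination of S
  have hSdecomp : ∀ β ∈ P, IsNonnegIntComb S β := by
    have key : ∀ N : ℕ, ∀ β ∈ P,
        (hPfin.toFinset.filter (fun γ => ⟪u, γ⟫ ≤ ⟪u, β⟫)).card ≤ N →
        IsNonnegIntComb S β := by
      intro N
      induction N with
      | zero =>
        intro β hβ hcard
        exfalso
        have : β ∈ hPfin.toFinset.filter (fun γ => ⟪u, γ⟫ ≤ ⟪u, β⟫) :=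
          Finset.mem_filter.mpr ⟨hPfin.mem_toFinset.mpr hβ, le_refl _⟩
        have := Finset.card_pos.mpr ⟨β, this⟩
        omega
      | succ N ih =>
        intro β hβ hcard
        by_cases hdec : ∃ γ ∈ P, ∃ δ ∈ P, β = γ + δ
        · obtain ⟨γ, hγ, δ, hδ, hβeq⟩ := hdec
          have hfadd : ⟪u, β⟫ = ⟪u, γ⟫ + ⟪u, δ⟫ := by rw [hβeq, inner_add_right]
          have hγlt : ⟪u, γ⟫ < ⟪u, β⟫ := by have := hδ.2; linarith
          have hδlt : ⟪u, δ⟫ < ⟪u, β⟫ := by have := hγ.2; linarith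
          have hcard' : ∀ ρ ∈ P, ⟪u, ρ⟫ < ⟪u, β⟫ →
              (hPfin.toFinset.filter (fun γ' => ⟪u, γ'⟫ ≤ ⟪u, ρ⟫)).card ≤ N := by
            intro ρ hρ hρlt
            have hsub : hPfin.toFinset.filter (fun γ' => ⟪u, γ'⟫ ≤ ⟪u, ρ⟫) ⊆
                hPfin.toFinset.filter (fun γ' => ⟪u, γ'⟫ ≤ ⟪u, β⟫) := by
              intro x hx
              rw [Finset.mem_filter] at hx ⊢
              exact ⟨hx.1, by linarith [hx.2]⟩
            have hβnot : β ∉ hPfin.toFinset.filter (fun γ' => ⟪u, γ'⟫ ≤ ⟪u, ρ⟫) := by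
              rw [Finset.mem_filter]
              rintro ⟨-, h⟩
              linarith
            have hβin : β ∈ hPfin.toFinset.filter (fun γ' => ⟪u, γ'⟫ ≤ ⟪u, β⟫) :=
              Finset.mem_filter.mpr ⟨hPfin.mem_toFinset.mpr hβ, le_refl _⟩
            have := Finset.card_lt_card (Finset.ssubset_iff_of_subset hsub |>.mpr
              ⟨β, hβin, hβnot⟩)
            omega
          obtain ⟨cγ, hcγS, hcγ0, hcγsum⟩ := ih γ hγ (hcard' γ hγ hγlt)
          obtain ⟨cδ, hcδS, hcδ0, hcδsum⟩ := ih δ hδ (hcard' δ hδ hδlt)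
          refine ⟨cγ + cδ, ?_, ?_, ?_⟩
          · intro a ha
            rcases Finset.mem_union.mp (Finsupp.support_add (Finset.mem_coe.mp ha)) with h | h
            · exact hcγS (Finset.mem_coe.mpr h)
            · exact hcδS (Finset.mem_coe.mpr h)
          · intro a
            rw [Finsupp.add_apply]
            exact add_nonneg (hcγ0 a) (hcδ0 a)
          · rw [hβeq, hcγsum, hcδsum]
            rw [Finsupp.sum_add_index' (fun a => by simp) (fun a m n => by
              push_cast; rw [add_smul])]
        · refine ⟨Finsupp.single β 1, ?_, ?_, ?_⟩
          · refine Set.Subset.trans (Finset.coe_subset.mpr Finsupp.support_single_subset) ?_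
            simp only [Finset.coe_singleton, Set.singleton_subset_iff]
            exact ⟨hβ, hdec⟩
          · intro a
            rw [Finsupp.single_apply]
            split <;> norm_num
          · rw [Finsupp.sum_single_index (by simp)]
            simp
    intro β hβ
    exact key hPfin.toFinset.card β hβ (Finset.card_le_card (Finset.filter_subset _ _))
  -- obtuse
  have hobtuse : ∀ γ ∈ S, ∀ δ ∈ S, γ ≠ δ → ⟪γ, δ⟫ ≤ 0 := by
    intro γ hγ δ hδ hne'
    by_contra hpos
    push_neg at hpos
    have hsub : γ - δ ∈ R := (hax γ (hSsubR hγ) δ (hSsubR hδ)).2.1 hpos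
    have hsub0 : γ - δ ≠ 0 := sub_ne_zero.mpr hne'
    rcases htrich _ hsub hsub0 with h | h
    · exact hγ.2 ⟨γ - δ, h, δ, hSsubP hδ, by abel⟩
    · rw [neg_sub] at h
      exact hδ.2 ⟨δ - γ, h, γ, hSsubP hγ, by abel⟩
  have hposu : ∀ γ ∈ S, 0 < ⟪u, γ⟫ := fun γ hγ => (hSsubP hγ).2
  have hLI : LinearIndependent ℝ ((↑) : S → V) := obtuse_linearIndependent u hposu hobtuse
  -- membership in span
  have hmemspan : ∀ β : V, IsNonnegIntComb S β → β ∈ Submodule.span ℝ S := by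
    rintro β ⟨c, hcS, -, hcsum⟩
    rw [hcsum, Finsupp.sum]
    refine Submodule.sum_mem _ (fun a ha => ?_)
    exact Submodule.smul_mem _ _ (Submodule.subset_span (hcS ha))
  have hspanS : Submodule.span ℝ S = ⊤ := by
    rw [eq_top_iff, ← hspan]
    rw [Submodule.span_le]
    intro β hβR
    by_cases hβ0 : β = 0
    · rw [hβ0]; exact Submodule.zero_mem _
    rcases htrich β hβR hβ0 with h | h
    · exact hmemspan β (hSdecomp β h)
    · have := hmemspan (-β) (hSdecomp (-β) h)
      simpa using Submodule.neg_mem _ this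
  -- dichotomy
  have hdich : ∀ β ∈ R, IsNonnegIntComb S β ∨ IsNonnegIntComb S (-β) := by
    intro β hβR
    by_cases hβ0 : β = 0
    · left
      refine ⟨0, by simp, by simp, ?_⟩
      rw [hβ0, Finsupp.sum_zero_index]
    rcases htrich β hβR hβ0 with h | h
    · exact Or.inl (hSdecomp β h)
    · exact Or.inr (hSdecomp (-β) h)
  -- α is indecomposable
  have hαS : α ∈ S := by
    refine ⟨hαP, ?_⟩
    rintro ⟨γ, hγ, δ, hδ, hαeq⟩
    have h1 := hkey γ hγ
    have h2 := hδ.2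
    have h3 : ⟪u, α⟫ = ⟪u, γ⟫ + ⟪u, δ⟫ := by rw [hαeq, inner_add_right]
    rw [hfα] at h3
    linarith
  exact ⟨S, ⟨hSsubR, hLI, hspanS, hdich⟩, hαS⟩
end

section
/- Let (R,V) be a generalized root system, let α ∈ R be nonzero, let β ∈ R, and let k < s be integers such that β + kα ∈ R and β + sα ∈ R. Then β + tα ∈ R for every integer t with k ≤ t ≤ s. -/
open scoped RealInnerProductSpace

variable {V : Type*} [NormedAddCommGroup V] [InnerProductSpace ℝ V] [FiniteDimensional ℝ V]

/-- Root strings are unbroken. -/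
theorem stmt4 (R : Set V) (hR : IsGRS R) (α β : V) (hα : α ∈ R) (hα0 : α ≠ 0)
    (hβ : β ∈ R) (k s : ℤ) (hks : k < s)
    (hk : β + (k : ℝ) • α ∈ R) (hs : β + (s : ℝ) • α ∈ R) :
    ∀ t : ℤ, k ≤ t → t ≤ s → β + (t : ℝ) • α ∈ R := by
  intro t hkt hts
  by_contra ht
  have hkt' : k < t := lt_of_le_of_ne hkt (by rintro rfl; exact ht hk)
  have hts' : t < s := lt_of_le_of_ne hts (by rintro rfl; exact ht hs)
  obtain ⟨p, ⟨hpk, hpt, hpR⟩, hpmax⟩ :=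
    Int.exists_greatest_of_bdd (P := fun z => k ≤ z ∧ z < t ∧ β + (z : ℝ) • α ∈ R)
      ⟨t, fun z hz => le_of_lt hz.2.1⟩ ⟨k, le_refl k, hkt', hk⟩
  obtain ⟨q, ⟨hqt, hqs, hqR⟩, hqmin⟩ :=
    Int.exists_least_of_bdd (P := fun z => t < z ∧ z ≤ s ∧ β + (z : ℝ) • α ∈ R)
      ⟨t, fun z hz => le_of_lt hz.1⟩ ⟨s, hts', le_refl s, hs⟩
  have hp1 : β + ((p : ℝ) + 1) • α ∉ R := by
    intro h
    rcases lt_or_eq_of_le (Int.add_one_le_iff.mpr hpt) with h' | h'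
    · have := hpmax (p + 1) ⟨by omega, h', by push_cast; exact h⟩; omega
    · exact ht (by rw [← h']; push_cast; exact h)
  have hq1 : β + ((q : ℝ) - 1) • α ∉ R := by
    intro h
    rcases lt_or_eq_of_le (Int.le_sub_one_iff.mpr hqt) with h' | h'
    · have := hqmin (q - 1) ⟨h', by omega, by push_cast; exact h⟩; omega
    · exact ht (by rw [h']; push_cast; exact h)
  have ep : β + ((p : ℝ) + 1) • α = β + (p : ℝ) • α + α := by
    rw [add_smul, one_smul]; abel
  have eq' : β + ((q : ℝ) - 1) • α = β + (q : ℝ) • α - α := by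
    rw [sub_smul, one_smul]; abel
  have h1 : 0 ≤ ⟪β + (p : ℝ) • α, α⟫ := by
    by_contra h
    push_neg at h
    exact hp1 (by rw [ep]; exact (hR.2.2.2 _ hpR _ hα).1 h)
  have h2 : ⟪β + (q : ℝ) • α, α⟫ ≤ 0 := by
    by_contra h
    push_neg at h
    exact hq1 (by rw [eq']; exact (hR.2.2.2 _ hqR _ hα).2.1 h)
  have hpq : p < q := lt_trans hpt hqt
  have hip : ⟪β + (p : ℝ) • α, α⟫ = ⟪β, α⟫ + p * ⟪α, α⟫ := by
    simp [inner_add_left, real_inner_smul_left]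
  have hiq : ⟪β + (q : ℝ) • α, α⟫ = ⟪β, α⟫ + q * ⟪α, α⟫ := by
    simp [inner_add_left, real_inner_smul_left]
  have hpos : (0 : ℝ) < ⟪α, α⟫ :=
    real_inner_self_nonneg.lt_of_ne (fun h => hα0 (inner_self_eq_zero.mp h.symm))
  have hcast : (p : ℝ) < (q : ℝ) := by exact_mod_cast hpq
  nlinarith [h1, h2, hip, hiq, hpos, hcast]
end

section
/- Let (R,V) be an irreducible generalized root system with base S. Then there exists a unique root θ ∈ R such that β ≺_S θ for every β ∈ R; moreover, writing θ = Σ_{α∈S} k_α α, one has k_α > 0 for every α ∈ S. -/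
open scoped RealInnerProductSpace

variable {V : Type*} [NormedAddCommGroup V] [InnerProductSpace ℝ V] [FiniteDimensional ℝ V]

set_option linter.unusedSectionVars false

namespace Stmt5Aux

noncomputable def fz {V : Type*} [NormedAddCommGroup V] [InnerProductSpace ℝ V]
    (c : V →₀ ℤ) : V := c.sum fun α n => (n : ℝ) • α

variable {V : Type*} [NormedAddCommGroup V] [InnerProductSpace ℝ V]

lemma fz_eq (c : V →₀ ℤ) : fz c = Finsupp.linearCombination ℤ (id : V → V) c := by
  rw [fz, Finsupp.linearCombination_apply]
  exact Finsupp.sum_congr fun α _ => by rw [id_eq, Int.cast_smul_eq_zsmul]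

lemma fz_add (c d : V →₀ ℤ) : fz (c + d) = fz c + fz d := by
  simp only [fz_eq, map_add]

lemma fz_sub (c d : V →₀ ℤ) : fz (c - d) = fz c - fz d := by
  simp only [fz_eq, map_sub]

lemma fz_zero : fz (0 : V →₀ ℤ) = 0 := by simp [fz]

lemma fz_single (α : V) : fz (Finsupp.single α 1) = α := by
  simp [fz, Finsupp.sum_single_index]

lemma fz_inj {S : Set V} (hli : LinearIndependent ℝ ((↑) : S → V))
    {c d : V →₀ ℤ} (hc : ↑c.support ⊆ S) (hd : ↑d.support ⊆ S) (h : fz c = fz d) :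
    c = d := by
  classical
  have hsub : ((c - d).support : Set V) ⊆ S := by
    intro x hx
    have hx' : x ∈ c.support ∪ d.support := Finsupp.support_sub (by simpa using hx)
    rcases Finset.mem_union.1 hx' with h' | h'
    · exact hc h'
    · exact hd h'
  set e := c - d with he
  have hfe : fz e = 0 := by rw [he, fz_sub, h, sub_self]
  set g : V →₀ ℝ := e.mapRange (Int.cast : ℤ → ℝ) Int.cast_zero with hg
  have hgsupp : g ∈ Finsupp.supported ℝ ℝ S := by
    intro x hx
    have hx' : g x ≠ 0 := Finsupp.mem_support_iff.1 hx
    rw [hg, Finsupp.mapRange_apply] at hx'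
    exact hsub (Finsupp.mem_support_iff.2 (by exact_mod_cast hx'))
  have hlc : Finsupp.linearCombination ℝ (id : V → V) g = 0 := by
    rw [Finsupp.linearCombination_apply, hg]
    rw [Finsupp.sum_mapRange_index (by simp)]
    simpa [fz] using hfe
  have hg0 : g = 0 := (linearIndepOn_iff.1 (linearIndependent_subtype_iff.1 hli)) g hgsupp hlc
  have he0 : e = 0 := by
    ext x
    have := Finsupp.ext_iff.1 hg0 x
    simp only [hg, Finsupp.mapRange_apply, Finsupp.coe_zero, Pi.zero_apply] at this
    exact_mod_cast this
  exact sub_eq_zero.1 (he ▸ he0)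

lemma inner_fz (c : V →₀ ℤ) (w : V) :
    ⟪fz c, w⟫ = ∑ α ∈ c.support, (c α : ℝ) * ⟪α, w⟫ := by
  rw [fz, Finsupp.sum, sum_inner]
  exact Finset.sum_congr rfl fun α _ => by rw [real_inner_smul_left]

lemma L_fz (S : Set V) (L : V →ₗ[ℝ] ℝ) (hL : ∀ α ∈ S, L α = 1)
    {c : V →₀ ℤ} (hc : ↑c.support ⊆ S) :
    L (fz c) = c.sum fun _ n => (n : ℝ) := by
  rw [fz, map_finsuppSum]
  refine Finsupp.sum_congr fun α hα => ?_
  rw [map_smul, hL α (hc hα), smul_eq_mul, mul_one]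

lemma ht_nonneg {c : V →₀ ℤ} (hpos : ∀ α, 0 ≤ c α) :
    (0:ℝ) ≤ c.sum fun _ n => (n : ℝ) := by
  rw [Finsupp.sum]
  exact Finset.sum_nonneg fun α _ => by exact_mod_cast hpos α

lemma ht_eq_zero {c : V →₀ ℤ} (hpos : ∀ α, 0 ≤ c α)
    (h : (c.sum fun _ n => (n : ℝ)) = 0) : c = 0 := by
  have h' : ∀ α ∈ c.support, (c α : ℝ) = 0 := by
    refine (Finset.sum_eq_zero_iff_of_nonneg fun α _ => by exact_mod_cast hpos α).1 ?_
    simpa [Finsupp.sum] using h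
  ext α
  by_cases hα : α ∈ c.support
  · exact_mod_cast h' α hα
  · simpa using Finsupp.notMem_support_iff.1 hα

lemma nn_iff {S : Set V} {v : V} :
    IsNonnegIntComb S v ↔ ∃ c : V →₀ ℤ, ↑c.support ⊆ S ∧ (∀ α, 0 ≤ c α) ∧ v = fz c :=
  Iff.rfl

lemma nn_zero (S : Set V) : IsNonnegIntComb S (0 : V) :=
  ⟨0, by simp, fun _ => le_refl _, by simp⟩

lemma nn_single {S : Set V} {α : V} (hα : α ∈ S) : IsNonnegIntComb S α := by
  refine ⟨Finsupp.single α 1, ?_, fun β => ?_, (fz_single α).symm⟩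
  · intro x hx
    have : x ∈ ({α} : Finset V) := Finsupp.support_single_subset (Finset.mem_coe.1 hx)
    simp only [Finset.mem_singleton] at this
    subst this; exact hα
  · rcases eq_or_ne β α with rfl | h
    · simp
    · simp [Finsupp.single_apply, Ne.symm h]

lemma nn_add {S : Set V} {u v : V} (hu : IsNonnegIntComb S u) (hv : IsNonnegIntComb S v) :
    IsNonnegIntComb S (u + v) := by
  classical
  obtain ⟨c, hc, hcpos, rfl⟩ := hu
  obtain ⟨d, hd, hdpos, rfl⟩ := hv
  refine ⟨c + d, ?_, fun α => ?_, (fz_add c d).symm⟩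
  · intro x hx
    have : x ∈ c.support ∪ d.support := Finsupp.support_add (by simpa using hx)
    rcases Finset.mem_union.1 this with h | h
    · exact hc h
    · exact hd h
  · have := add_nonneg (hcpos α) (hdpos α); simpa using this

lemma nn_L_nonneg {S : Set V} (L : V →ₗ[ℝ] ℝ) (hL : ∀ α ∈ S, L α = 1)
    {v : V} (hv : IsNonnegIntComb S v) : 0 ≤ L v := by
  obtain ⟨c, hc, hcpos, rfl⟩ := nn_iff.1 hv
  rw [L_fz S L hL hc]
  exact ht_nonneg hcpos

lemma nn_L_zero {S : Set V} (L : V →ₗ[ℝ] ℝ) (hL : ∀ α ∈ S, L α = 1)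
    {v : V} (hv : IsNonnegIntComb S v) (h : L v = 0) : v = 0 := by
  obtain ⟨c, hc, hcpos, rfl⟩ := nn_iff.1 hv
  rw [L_fz S L hL hc] at h
  rw [ht_eq_zero hcpos h, fz_zero]

end Stmt5Aux

namespace Stmt5Aux

variable {V : Type*} [NormedAddCommGroup V] [InnerProductSpace ℝ V] [FiniteDimensional ℝ V]

lemma decomp (R S : Set V) (hR : IsGRS R) (hS : IsBase R S)
    (S₂ : Set V) (hS₂ : S₂ ⊆ S)
    (horth : ∀ β ∈ S, β ∉ S₂ → ∀ δ ∈ S₂, ⟪β, δ⟫ = 0) :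
    ∀ N : ℕ, ∀ v ∈ R, ∀ c : V →₀ ℤ, ↑c.support ⊆ S → (∀ α, 0 ≤ c α) →
      v = fz c → (c.sum fun _ n => (n : ℝ)) ≤ N →
      (∀ γ ∈ c.support, (γ : V) ∉ S₂) ∨ (↑c.support ⊆ S₂) := by
  classical
  have hli := hS.2.1
  intro N
  induction N with
  | zero =>
    intro v hv c hc hcpos hceq hht
    have : c = 0 := ht_eq_zero hcpos (le_antisymm (by exact_mod_cast hht) (ht_nonneg hcpos))
    subst this
    exact Or.inl (by simp)
  | succ N ih =>
    intro v hv c hc hcpos hceq hht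
    by_cases h1 : ∀ γ ∈ c.support, (γ : V) ∉ S₂
    · exact Or.inl h1
    by_cases h2 : (↑c.support : Set V) ⊆ S₂
    · exact Or.inr h2
    exfalso
    push_neg at h1
    obtain ⟨β₂, hβ₂supp, hβ₂S₂⟩ := h1
    obtain ⟨β₁, hβ₁supp', hβ₁S₂⟩ := Set.not_subset.1 h2
    have hβ₁supp : β₁ ∈ c.support := hβ₁supp'
    have hvne : v ≠ 0 := by
      intro h
      have : c = 0 := fz_inj hli hc (by simp) (by rw [← hceq, h, fz_zero])
      rw [this] at hβ₂supp; simp at hβ₂supp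
    have hip : (0:ℝ) < ⟪v, v⟫ :=
      lt_of_le_of_ne real_inner_self_nonneg
        (Ne.symm fun h => hvne ((inner_self_eq_zero (𝕜 := ℝ)).1 h))
    have hsum : ⟪v, v⟫ = ∑ γ ∈ c.support, (c γ : ℝ) * ⟪γ, v⟫ := by
      rw [show (⟪v, v⟫ : ℝ) = ⟪fz c, v⟫ by rw [← hceq], inner_fz]
    obtain ⟨α, hαsupp, hterm⟩ : ∃ γ ∈ c.support, 0 < (c γ : ℝ) * ⟪γ, v⟫ := by
      by_contra hcon
      push_neg at hcon
      have : ⟪v, v⟫ ≤ 0 := hsum ▸ Finset.sum_nonpos hcon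
      linarith
    have hcα : 0 < c α :=
      lt_of_le_of_ne (hcpos α) (Ne.symm (Finsupp.mem_support_iff.1 hαsupp))
    have hinner : 0 < ⟪α, v⟫ := by
      rcases lt_or_ge 0 ⟪α, v⟫ with h | h
      · exact h
      · exfalso
        have : (c α : ℝ) * ⟪α, v⟫ ≤ 0 :=
          mul_nonpos_of_nonneg_of_nonpos (by exact_mod_cast hcpos α) h
        linarith
    have hαS : α ∈ S := hc hαsupp
    have hαR : α ∈ R := hS.1 hαS
    have hvα : 0 < ⟪v, α⟫ := by rwa [real_inner_comm]
    have hsubR : v - α ∈ R := (hR.2.2.2 v hv α hαR).2.1 hvα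
    have hsingsupp : ∀ d : V →₀ ℤ, (↑d.support : Set V) ⊆ S →
        ((Finsupp.single α (1:ℤ) - d).support : Set V) ⊆ S := by
      intro d hd x hx
      have : x ∈ (Finsupp.single α (1:ℤ)).support ∪ d.support :=
        Finsupp.support_sub (by simpa using hx)
      rcases Finset.mem_union.1 this with h | h
      · have : x ∈ ({α} : Finset V) := Finsupp.support_single_subset h
        simp only [Finset.mem_singleton] at this
        subst this; exact hαS
      · exact hd h
    rcases hS.2.2.2 _ hsubR with ⟨e, he, hepos, heq⟩ | ⟨e, he, hepos, heq⟩
    · -- v - α is a nonneg combination, heq : v - α = fz e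
      have heq : v - α = fz e := heq
      have hce : c = e + Finsupp.single α (1:ℤ) := by
        refine fz_inj hli hc ?_ ?_
        · intro x hx
          have : x ∈ e.support ∪ (Finsupp.single α (1:ℤ)).support :=
            Finsupp.support_add (by simpa using hx)
          rcases Finset.mem_union.1 this with h | h
          · exact he h
          · have : x ∈ ({α} : Finset V) := Finsupp.support_single_subset h
            simp only [Finset.mem_singleton] at this
            subst this; exact hαS
        · rw [fz_add, fz_single, ← heq, ← hceq]; abel
      have hcapp : ∀ β, β ≠ α → e β = c β := by
        intro β hβ
        rw [hce, Finsupp.add_apply, Finsupp.single_apply, if_neg (Ne.symm hβ), add_zero]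
      have hht' : (e.sum fun _ n => (n : ℝ)) ≤ N := by
        have : (c.sum fun _ n => (n : ℝ)) = (e.sum fun _ n => (n : ℝ)) + 1 := by
          rw [hce, Finsupp.sum_add_index' (fun _ => by norm_num)
            (fun i b₁ b₂ => by push_cast; ring),
            Finsupp.sum_single_index (by norm_num)]
          norm_num
        push_cast at hht
        linarith
      have IH := ih (v - α) hsubR e he hepos heq hht'
      -- shared contradiction machine
      have contra : ∀ β', β' ∈ e.support → β' ≠ α → e α = 0 → ⟪fz e, α⟫ = 0 → False := by
        intro β' hβ'supp hβ'ne heα horthw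
        have hw : fz e ∈ R := heq ▸ hsubR
        have hiff := (hR.2.2.2 α hαR (fz e) hw).2.2 (by rw [real_inner_comm]; exact horthw)
        have hsumR : α + fz e ∈ R := by
          have : α + fz e = v := by rw [← heq]; abel
          rwa [this]
        have hdiffR : α - fz e ∈ R := hiff.1 hsumR
        rcases hS.2.2.2 _ hdiffR with ⟨g, hg, hgpos, hgeq⟩ | ⟨g, hg, hgpos, hgeq⟩
        · have hgeq : α - fz e = fz g := hgeq
          have hg' : g = Finsupp.single α (1:ℤ) - e :=
            fz_inj hli hg (hsingsupp e he) (by rw [fz_sub, fz_single, ← hgeq])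
          have hgβ' : g β' = -(e β') := by
            rw [hg', Finsupp.sub_apply, Finsupp.single_apply, if_neg (Ne.symm hβ'ne), zero_sub]
          have heβ' : 0 < e β' :=
            lt_of_le_of_ne (hepos β') (Ne.symm (Finsupp.mem_support_iff.1 hβ'supp))
          have hgβ'nonneg := hgpos β'
          omega
        · have hgeq : -(α - fz e) = fz g := hgeq
          have hg' : g = e - Finsupp.single α (1:ℤ) := by
            refine fz_inj hli hg ?_ (by rw [fz_sub, fz_single, ← hgeq]; abel)
            intro x hx
            have : x ∈ e.support ∪ (Finsupp.single α (1:ℤ)).support :=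
              Finsupp.support_sub (by simpa using hx)
            rcases Finset.mem_union.1 this with h | h
            · exact he h
            · have : x ∈ ({α} : Finset V) := Finsupp.support_single_subset h
              simp only [Finset.mem_singleton] at this
              subst this; exact hαS
          have hgα : g α = -1 := by
            rw [hg', Finsupp.sub_apply, heα, Finsupp.single_apply, if_pos rfl]
            norm_num
          have := hgpos α
          omega
      by_cases hα2 : α ∈ S₂
      · -- use β₁, which is not in S₂ hence ≠ α
        have hβ₁ne : β₁ ≠ α := fun h => hβ₁S₂ (h ▸ hα2)
        have hβ₁e : β₁ ∈ e.support :=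
          Finsupp.mem_support_iff.2 (by rw [hcapp β₁ hβ₁ne]; exact Finsupp.mem_support_iff.1 hβ₁supp)
        have hesupp : ∀ γ ∈ e.support, (γ : V) ∉ S₂ := by
          rcases IH with h | h
          · exact h
          · exact absurd (h hβ₁e) hβ₁S₂
        refine contra β₁ hβ₁e hβ₁ne ?_ ?_
        · by_contra h
          exact hesupp α (Finsupp.mem_support_iff.2 h) hα2
        · rw [inner_fz]
          refine Finset.sum_eq_zero fun δ hδ => ?_
          rw [horth δ (he hδ) (hesupp δ hδ) α hα2, mul_zero]
      · -- use β₂ ∈ S₂, which is ≠ α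
        have hβ₂ne : β₂ ≠ α := fun h => hα2 (h ▸ hβ₂S₂)
        have hβ₂e : β₂ ∈ e.support :=
          Finsupp.mem_support_iff.2 (by rw [hcapp β₂ hβ₂ne]; exact Finsupp.mem_support_iff.1 hβ₂supp)
        have hesupp : (↑e.support : Set V) ⊆ S₂ := by
          rcases IH with h | h
          · exact absurd hβ₂S₂ (h β₂ hβ₂e)
          · exact h
        refine contra β₂ hβ₂e hβ₂ne ?_ ?_
        · by_contra h
          exact hα2 (hesupp (Finsupp.mem_support_iff.2 h))
        · rw [inner_fz]
          refine Finset.sum_eq_zero fun δ hδ => ?_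
          rw [real_inner_comm, horth α hαS hα2 δ (hesupp hδ), mul_zero]
          
    · -- v - α is a nonpos combination : heq : -(v-α) = fz e
      have heq : -(v - α) = fz e := heq
      have he' : e = Finsupp.single α (1:ℤ) - c :=
        fz_inj hli he (hsingsupp c hc)
          (by rw [fz_sub, fz_single, ← hceq, ← heq]; abel)
      obtain ⟨β', hβ'supp, hβ'ne⟩ : ∃ β', β' ∈ c.support ∧ β' ≠ α := by
        rcases eq_or_ne β₁ α with h | h
        · exact ⟨β₂, hβ₂supp, fun hh => hβ₁S₂ (by rw [h, ← hh]; exact hβ₂S₂)⟩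
        · exact ⟨β₁, hβ₁supp, h⟩
      have heβ' : e β' = -(c β') := by
        rw [he', Finsupp.sub_apply, Finsupp.single_apply, if_neg (Ne.symm hβ'ne), zero_sub]
      have hcβ' : 0 < c β' :=
        lt_of_le_of_ne (hcpos β') (Ne.symm (Finsupp.mem_support_iff.1 hβ'supp))
      have hnn := hepos β'
      omega



lemma decomp_neg (R S : Set V) (hR : IsGRS R) (hS : IsBase R S)
    (S₂ : Set V) (hS₂ : S₂ ⊆ S)
    (horth : ∀ β ∈ S, β ∉ S₂ → ∀ δ ∈ S₂, ⟪β, δ⟫ = 0) :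
    ∀ N : ℕ, ∀ v ∈ R, ∀ c : V →₀ ℤ, ↑c.support ⊆ S → (∀ α, 0 ≤ c α) →
      -v = fz c → (c.sum fun _ n => (n : ℝ)) ≤ N →
      (∀ γ ∈ c.support, (γ : V) ∉ S₂) ∨ (↑c.support ⊆ S₂) := by
  classical
  have hli := hS.2.1
  intro N
  induction N with
  | zero =>
    intro v hv c hc hcpos hceq hht
    have : c = 0 := ht_eq_zero hcpos (le_antisymm (by exact_mod_cast hht) (ht_nonneg hcpos))
    subst this
    exact Or.inl (by simp)
  | succ N ih =>
    intro v hv c hc hcpos hceq hht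
    by_cases h1 : ∀ γ ∈ c.support, (γ : V) ∉ S₂
    · exact Or.inl h1
    by_cases h2 : (↑c.support : Set V) ⊆ S₂
    · exact Or.inr h2
    exfalso
    push_neg at h1
    obtain ⟨β₂, hβ₂supp, hβ₂S₂⟩ := h1
    obtain ⟨β₁, hβ₁supp', hβ₁S₂⟩ := Set.not_subset.1 h2
    have hβ₁supp : β₁ ∈ c.support := hβ₁supp'
    have hvne : v ≠ 0 := by
      intro h
      have : c = 0 := fz_inj hli hc (by simp) (by rw [fz_zero, ← hceq, h, neg_zero])
      rw [this] at hβ₂supp; simp at hβ₂supp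
    have hip : (0:ℝ) < ⟪v, v⟫ :=
      lt_of_le_of_ne real_inner_self_nonneg
        (Ne.symm fun h => hvne ((inner_self_eq_zero (𝕜 := ℝ)).1 h))
    have hsum : ⟪v, v⟫ = ∑ γ ∈ c.support, (c γ : ℝ) * ⟪γ, -v⟫ := by
      rw [show (⟪v, v⟫ : ℝ) = ⟪fz c, -v⟫ by rw [← hceq, inner_neg_neg], inner_fz]
    obtain ⟨α, hαsupp, hterm⟩ : ∃ γ ∈ c.support, 0 < (c γ : ℝ) * ⟪γ, -v⟫ := by
      by_contra hcon
      push_neg at hcon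
      have : ⟪v, v⟫ ≤ 0 := hsum ▸ Finset.sum_nonpos hcon
      linarith
    have hcα : 0 < c α :=
      lt_of_le_of_ne (hcpos α) (Ne.symm (Finsupp.mem_support_iff.1 hαsupp))
    have hinner : 0 < ⟪α, -v⟫ := by
      rcases lt_or_ge 0 ⟪α, -v⟫ with h | h
      · exact h
      · exfalso
        have : (c α : ℝ) * ⟪α, -v⟫ ≤ 0 :=
          mul_nonpos_of_nonneg_of_nonpos (by exact_mod_cast hcpos α) h
        linarith
    have hαS : α ∈ S := hc hαsupp
    have hαR : α ∈ R := hS.1 hαS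
    have hvα : ⟪v, α⟫ < 0 := by
      rw [inner_neg_right] at hinner
      rw [real_inner_comm]
      linarith
    have haddR : v + α ∈ R := (hR.2.2.2 v hv α hαR).1 hvα
    have hsingsupp : ∀ d : V →₀ ℤ, (↑d.support : Set V) ⊆ S →
        ((Finsupp.single α (1:ℤ) - d).support : Set V) ⊆ S := by
      intro d hd x hx
      have : x ∈ (Finsupp.single α (1:ℤ)).support ∪ d.support :=
        Finsupp.support_sub (by simpa using hx)
      rcases Finset.mem_union.1 this with h | h
      · have : x ∈ ({α} : Finset V) := Finsupp.support_single_subset h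
        simp only [Finset.mem_singleton] at this
        subst this; exact hαS
      · exact hd h
    rcases hS.2.2.2 _ haddR with ⟨e, he, hepos, heq⟩ | ⟨e, he, hepos, heq⟩
    · -- v + α is a nonneg combination: then supp c ⊆ {α}, contradiction with β₁ β₂
      have heq : v + α = fz e := heq
      have he' : e = Finsupp.single α (1:ℤ) - c :=
        fz_inj hli he (hsingsupp c hc)
          (by rw [fz_sub, fz_single, ← hceq, ← heq]; abel)
      have hczero : ∀ β, β ≠ α → c β = 0 := by
        intro β hβ
        have h1 : e β = -(c β) := by
          rw [he', Finsupp.sub_apply, Finsupp.single_apply, if_neg (Ne.symm hβ), zero_sub]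
        have h2 := hepos β
        have h3 := hcpos β
        omega
      have hβ₁α : β₁ = α := by
        by_contra h
        exact (Finsupp.mem_support_iff.1 hβ₁supp) (hczero β₁ h)
      have hβ₂α : β₂ = α := by
        by_contra h
        exact (Finsupp.mem_support_iff.1 hβ₂supp) (hczero β₂ h)
      exact hβ₁S₂ (by rw [hβ₁α, ← hβ₂α]; exact hβ₂S₂)
    · -- v + α is a nonpos combination: heq : -(v+α) = fz e
      have heq : -(v + α) = fz e := heq
      have hce : c = e + Finsupp.single α (1:ℤ) := by
        refine fz_inj hli hc ?_ ?_
        · intro x hx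
          have : x ∈ e.support ∪ (Finsupp.single α (1:ℤ)).support :=
            Finsupp.support_add (by simpa using hx)
          rcases Finset.mem_union.1 this with h | h
          · exact he h
          · have : x ∈ ({α} : Finset V) := Finsupp.support_single_subset h
            simp only [Finset.mem_singleton] at this
            subst this; exact hαS
        · rw [fz_add, fz_single, ← heq, ← hceq]; abel
      have hcapp : ∀ β, β ≠ α → e β = c β := by
        intro β hβ
        rw [hce, Finsupp.add_apply, Finsupp.single_apply, if_neg (Ne.symm hβ), add_zero]
      have hht' : (e.sum fun _ n => (n : ℝ)) ≤ N := by
        have : (c.sum fun _ n => (n : ℝ)) = (e.sum fun _ n => (n : ℝ)) + 1 := by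
          rw [hce, Finsupp.sum_add_index' (fun _ => by norm_num)
            (fun i b₁ b₂ => by push_cast; ring),
            Finsupp.sum_single_index (by norm_num)]
          norm_num
        push_cast at hht
        linarith
      have IH := ih (v + α) haddR e he hepos heq hht'
      have contra : ∀ β', β' ∈ e.support → β' ≠ α → e α = 0 → ⟪fz e, α⟫ = 0 → False := by
        intro β' hβ'supp hβ'ne heα horthw
        have hvα' : v + α = -fz e := by rw [← heq]; abel
        have hiff := (hR.2.2.2 (v + α) haddR α hαR).2.2
          (by rw [hvα', inner_neg_left, real_inner_comm]
              rw [real_inner_comm] at horthw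
              rw [horthw, neg_zero])
        have hsumR : v + α + α ∈ R := hiff.2 (by rw [add_sub_cancel_right]; exact hv)
        have hdiffR : α - fz e ∈ R := by
          have h2 : α - fz e = v + α + α := by rw [← heq]; abel
          rwa [h2]
        rcases hS.2.2.2 _ hdiffR with ⟨g, hg, hgpos, hgeq⟩ | ⟨g, hg, hgpos, hgeq⟩
        · have hgeq : α - fz e = fz g := hgeq
          have hg' : g = Finsupp.single α (1:ℤ) - e :=
            fz_inj hli hg (hsingsupp e he) (by rw [fz_sub, fz_single, ← hgeq])
          have hgβ' : g β' = -(e β') := by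
            rw [hg', Finsupp.sub_apply, Finsupp.single_apply, if_neg (Ne.symm hβ'ne), zero_sub]
          have heβ' : 0 < e β' :=
            lt_of_le_of_ne (hepos β') (Ne.symm (Finsupp.mem_support_iff.1 hβ'supp))
          have hgβ'nonneg := hgpos β'
          omega
        · have hgeq : -(α - fz e) = fz g := hgeq
          have hg' : g = e - Finsupp.single α (1:ℤ) := by
            refine fz_inj hli hg ?_ (by rw [fz_sub, fz_single, ← hgeq]; abel)
            intro x hx
            have : x ∈ e.support ∪ (Finsupp.single α (1:ℤ)).support :=
              Finsupp.support_sub (by simpa using hx)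
            rcases Finset.mem_union.1 this with h | h
            · exact he h
            · have : x ∈ ({α} : Finset V) := Finsupp.support_single_subset h
              simp only [Finset.mem_singleton] at this
              subst this; exact hαS
          have hgα : g α = -1 := by
            rw [hg', Finsupp.sub_apply, heα, Finsupp.single_apply, if_pos rfl]
            norm_num
          have := hgpos α
          omega
      by_cases hα2 : α ∈ S₂
      · have hβ₁ne : β₁ ≠ α := fun h => hβ₁S₂ (h ▸ hα2)
        have hβ₁e : β₁ ∈ e.support :=
          Finsupp.mem_support_iff.2 (by rw [hcapp β₁ hβ₁ne]; exact Finsupp.mem_support_iff.1 hβ₁supp)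
        have hesupp : ∀ γ ∈ e.support, (γ : V) ∉ S₂ := by
          rcases IH with h | h
          · exact h
          · exact absurd (h hβ₁e) hβ₁S₂
        refine contra β₁ hβ₁e hβ₁ne ?_ ?_
        · by_contra h
          exact hesupp α (Finsupp.mem_support_iff.2 h) hα2
        · rw [inner_fz]
          refine Finset.sum_eq_zero fun δ hδ => ?_
          rw [horth δ (he hδ) (hesupp δ hδ) α hα2, mul_zero]
      · have hβ₂ne : β₂ ≠ α := fun h => hα2 (h ▸ hβ₂S₂)
        have hβ₂e : β₂ ∈ e.support :=
          Finsupp.mem_support_iff.2 (by rw [hcapp β₂ hβ₂ne]; exact Finsupp.mem_support_iff.1 hβ₂supp)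
        have hesupp : (↑e.support : Set V) ⊆ S₂ := by
          rcases IH with h | h
          · exact absurd hβ₂S₂ (h β₂ hβ₂e)
          · exact h
        refine contra β₂ hβ₂e hβ₂ne ?_ ?_
        · by_contra h
          exact hα2 (hesupp (Finsupp.mem_support_iff.2 h))
        · rw [inner_fz]
          refine Finset.sum_eq_zero fun δ hδ => ?_
          rw [real_inner_comm, horth α hαS hα2 δ (hesupp hδ), mul_zero]

end Stmt5Aux

open Stmt5Aux in
/-- An irreducible GRS has a unique highest root `θ` with respect to any
base `S`, and all coefficients of `θ` in `S` are positive. -/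
theorem stmt5 (R S : Set V) (hR : IsGRS R) (hirr : IsIrreducibleGRS R)
    (hS : IsBase R S) :
    (∃! θ, θ ∈ R ∧ ∀ β ∈ R, prec S β θ) ∧
      ∀ θ, θ ∈ R → (∀ β ∈ R, prec S β θ) →
        ∃ c : V →₀ ℤ, ↑c.support ⊆ S ∧ (∀ α ∈ S, 0 < c α) ∧
          θ = c.sum fun α n => (n : ℝ) • α := by
  classical
  have hli := hS.2.1
  have hax := hR.2.2.2
  by_cases hs : S = ∅
  · -- degenerate case: V = 0
    have hall : ∀ v : V, v = 0 := by
      intro v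
      have hv : v ∈ Submodule.span ℝ S := by rw [hS.2.2.1]; trivial
      rw [hs, Submodule.span_empty, Submodule.mem_bot] at hv
      exact hv
    obtain ⟨x, hx⟩ := hR.1
    have h0R : (0 : V) ∈ R := hall x ▸ hx
    have hprec0 : ∀ β ∈ R, prec S β 0 := by
      intro β hβ
      show IsNonnegIntComb S (0 - β)
      rw [hall β, sub_zero]
      exact nn_zero S
    refine ⟨⟨0, ⟨h0R, hprec0⟩, fun y _ => hall y⟩, ?_⟩
    intro θ hθ hmax
    refine ⟨0, by simp, by rw [hs]; simp, ?_⟩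
    rw [hall θ, Finsupp.sum_zero_index]
  · obtain ⟨α₀, hα₀⟩ := Set.nonempty_iff_ne_empty.2 hs
    have hsp : ⊤ ≤ Submodule.span ℝ (Set.range ((↑) : S → V)) := by
      rw [Subtype.range_coe, hS.2.2.1]
    set b : Module.Basis S ℝ V := Module.Basis.mk hli hsp with hb
    set L : V →ₗ[ℝ] ℝ := b.sumCoords with hLdef
    have hL : ∀ α ∈ S, L α = 1 := by
      intro α hα
      have h1 : b ⟨α, hα⟩ = α := by rw [hb, Module.Basis.coe_mk]
      have h2 := Module.Basis.sumCoords_self_apply (b := b) (i := ⟨α, hα⟩)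
      rw [h1] at h2
      exact h2
    have prec_refl : ∀ x : V, prec S x x := fun x => by
      show IsNonnegIntComb S (x - x); rw [sub_self]; exact nn_zero S
    have prec_trans : ∀ x y z : V, prec S x y → prec S y z → prec S x z := by
      intro x y z h1 h2
      have h1' : IsNonnegIntComb S (y - x) := h1
      have h2' : IsNonnegIntComb S (z - y) := h2
      have h := nn_add h2' h1'
      show IsNonnegIntComb S (z - x)
      rwa [show z - y + (y - x) = z - x by abel] at h
    have prec_antisym : ∀ x y : V, prec S x y → prec S y x → x = y := by
      intro x y h1 h2
      have h1' : IsNonnegIntComb S (y - x) := h1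
      have h2' : IsNonnegIntComb S (x - y) := h2
      have g1 := nn_L_nonneg L hL h1'
      have g2 := nn_L_nonneg L hL h2'
      rw [map_sub] at g1 g2
      have h0 : L (y - x) = 0 := by rw [map_sub]; linarith
      exact (sub_eq_zero.1 (nn_L_zero L hL h1' h0)).symm
    have exists_max : ∀ β ∈ R, ∃ θ ∈ R, prec S β θ ∧ ∀ γ ∈ R, prec S θ γ → γ = θ := by
      intro β hβ
      have hfin : {γ | γ ∈ R ∧ prec S β γ}.Finite := hR.2.1.subset fun x hx => hx.1
      obtain ⟨θ, hθs, hmax⟩ := Set.Finite.exists_maximalFor L _ hfin ⟨β, hβ, prec_refl β⟩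
      refine ⟨θ, hθs.1, hθs.2, ?_⟩
      intro γ hγ hpg
      have hpg' : IsNonnegIntComb S (γ - θ) := hpg
      have hγs : γ ∈ {γ | γ ∈ R ∧ prec S β γ} := ⟨hγ, prec_trans _ _ _ hθs.2 hpg⟩
      have hnn := nn_L_nonneg L hL hpg'
      rw [map_sub] at hnn
      have heq := hmax (j := γ) hγs (by linarith)
      have h0 : L (γ - θ) = 0 := by rw [map_sub]; linarith
      exact sub_eq_zero.1 (nn_L_zero L hL hpg' h0)
    have claimA : ∀ θ ∈ R, (∀ γ ∈ R, prec S θ γ → γ = θ) → ∀ α ∈ S, 0 ≤ ⟪θ, α⟫ := by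
      intro θ hθ hmax α hα
      by_contra hcon
      push_neg at hcon
      have hsumR : θ + α ∈ R := (hax θ hθ α (hS.1 hα)).1 hcon
      have hprec : prec S θ (θ + α) := by
        show IsNonnegIntComb S (θ + α - θ)
        rw [add_sub_cancel_left]
        exact nn_single hα
      have hαz : α = 0 := by
        have h := hmax _ hsumR hprec
        have h' : θ + α = θ + 0 := by rw [h, add_zero]
        exact add_left_cancel h'
      exact hli.ne_zero ⟨α, hα⟩ hαz
    have hα₀R : α₀ ∈ R := hS.1 hα₀
    obtain ⟨θ, hθR, hθge, hθmax⟩ := exists_max α₀ hα₀R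
    have hθge' : IsNonnegIntComb S (θ - α₀) := hθge
    have hθnn : IsNonnegIntComb S θ := by
      rcases hS.2.2.2 θ hθR with h | h
      · exact h
      · exfalso
        have h1 := nn_L_nonneg L hL hθge'
        have h2 := nn_L_nonneg L hL h
        rw [map_sub] at h1
        rw [map_neg] at h2
        have h3 := hL α₀ hα₀
        linarith
    obtain ⟨c, hcsupp, hcpos, hceqraw⟩ := hθnn
    have hceq : θ = fz c := hceqraw
    have hθne : θ ≠ 0 := by
      intro h
      have h1 := nn_L_nonneg L hL hθge'
      rw [h, map_sub, map_zero, hL α₀ hα₀] at h1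
      linarith
    have simple_nonpos : ∀ β ∈ S, ∀ δ ∈ S, β ≠ δ → ⟪β, δ⟫ ≤ 0 := by
      intro β hβ δ hδ hne
      by_contra hcon
      push_neg at hcon
      have hsub : β - δ ∈ R := (hax β (hS.1 hβ) δ (hS.1 hδ)).2.1 hcon
      have hsing : ∀ x y : V, x ∈ S → y ∈ S →
          (((Finsupp.single x (1:ℤ) - Finsupp.single y (1:ℤ)).support : Finset V) : Set V) ⊆ S := by
        intro x y hx hy z hz
        have : z ∈ (Finsupp.single x (1:ℤ)).support ∪ (Finsupp.single y (1:ℤ)).support :=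
          Finsupp.support_sub (by simpa using hz)
        rcases Finset.mem_union.1 this with h | h
        · have : z ∈ ({x} : Finset V) := Finsupp.support_single_subset h
          simp only [Finset.mem_singleton] at this; subst this; exact hx
        · have : z ∈ ({y} : Finset V) := Finsupp.support_single_subset h
          simp only [Finset.mem_singleton] at this; subst this; exact hy
      rcases hS.2.2.2 _ hsub with ⟨g, hg, hgpos, hgeq⟩ | ⟨g, hg, hgpos, hgeq⟩
      · have hgeq : β - δ = fz g := hgeq
        have hg' : g = Finsupp.single β (1:ℤ) - Finsupp.single δ (1:ℤ) :=
          fz_inj hli hg (hsing β δ hβ hδ) (by rw [fz_sub, fz_single, fz_single, ← hgeq])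
        have hgδ : g δ = -1 := by
          rw [hg', Finsupp.sub_apply, Finsupp.single_apply, if_neg hne,
            Finsupp.single_apply, if_pos rfl]
          norm_num
        have := hgpos δ
        omega
      · have hgeq : -(β - δ) = fz g := hgeq
        have hg' : g = Finsupp.single δ (1:ℤ) - Finsupp.single β (1:ℤ) :=
          fz_inj hli hg (hsing δ β hδ hβ)
            (by rw [fz_sub, fz_single, fz_single, ← hgeq]; abel)
        have hgβ : g β = -1 := by
          rw [hg', Finsupp.sub_apply, Finsupp.single_apply, if_neg (Ne.symm hne),
            Finsupp.single_apply, if_pos rfl]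
          norm_num
        have := hgpos β
        omega
    have claimB : ∀ α ∈ S, 0 < c α := by
      by_contra hcon
      push_neg at hcon
      obtain ⟨α, hα, hcα0⟩ := hcon
      have hcα : c α = 0 := le_antisymm hcα0 (hcpos α)
      set S₂ : Set V := {δ | δ ∈ S ∧ c δ = 0} with hS₂def
      have hS₂sub : S₂ ⊆ S := fun x hx => hx.1
      have hαS₂ : α ∈ S₂ := ⟨hα, hcα⟩
      have horth : ∀ β ∈ S, β ∉ S₂ → ∀ δ ∈ S₂, ⟪β, δ⟫ = 0 := by
        intro β hβ hβn δ hδ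
        have hcβ : c β ≠ 0 := fun h => hβn ⟨hβ, h⟩
        have hβsupp : β ∈ c.support := Finsupp.mem_support_iff.2 hcβ
        have hterms : ∀ γ ∈ c.support, (c γ : ℝ) * ⟪γ, δ⟫ ≤ 0 := by
          intro γ hγ
          have hγδ : γ ≠ δ := fun h => (Finsupp.mem_support_iff.1 hγ) (by rw [h]; exact hδ.2)
          exact mul_nonpos_of_nonneg_of_nonpos (by exact_mod_cast hcpos γ)
            (simple_nonpos γ (hcsupp hγ) δ hδ.1 hγδ)
        have hθδ : ⟪θ, δ⟫ = ∑ γ ∈ c.support, (c γ : ℝ) * ⟪γ, δ⟫ := by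
          rw [hceq, inner_fz]
        have hge : 0 ≤ ⟪θ, δ⟫ := claimA θ hθR hθmax δ hδ.1
        have hsum0 : ∑ γ ∈ c.support, (c γ : ℝ) * ⟪γ, δ⟫ = 0 :=
          le_antisymm (Finset.sum_nonpos hterms) (hθδ ▸ hge)
        have hterm0 := (Finset.sum_eq_zero_iff_of_nonpos hterms).1 hsum0 β hβsupp
        rcases mul_eq_zero.1 hterm0 with h | h
        · exact absurd (by exact_mod_cast h) hcβ
        · exact h
      have hspan_mem : ∀ (d : V →₀ ℤ) (T : Set V), ((d.support : Finset V) : Set V) ⊆ T →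
          fz d ∈ Submodule.span ℝ T := by
        intro d T hd
        rw [fz, Finsupp.sum]
        exact Submodule.sum_mem _ fun γ hγ =>
          Submodule.smul_mem _ _ (Submodule.subset_span (hd hγ))
      set S₁ : Set V := S \ S₂ with hS₁def
      set T₁ : Set V := {v | v ∈ R ∧ v ∈ Submodule.span ℝ S₁} with hT₁def
      set T₂ : Set V := {v | v ∈ R ∧ v ∈ Submodule.span ℝ S₂} with hT₂def
      have hcover : R = T₁ ∪ T₂ := by
        apply Set.Subset.antisymm
        · intro v hv
          rcases hS.2.2.2 v hv with ⟨d, h1, h2, h3⟩ | ⟨d, h1, h2, h3⟩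
          · have h3 : v = fz d := h3
            rcases decomp R S hR hS S₂ hS₂sub horth ⌈d.sum fun _ n => (n:ℝ)⌉₊ v hv d h1 h2 h3
                (Nat.le_ceil _) with h | h
            · exact Or.inl ⟨hv, by rw [h3]; exact hspan_mem d S₁ fun γ hγ => ⟨h1 hγ, h γ hγ⟩⟩
            · exact Or.inr ⟨hv, by rw [h3]; exact hspan_mem d S₂ h⟩
          · have h3 : -v = fz d := h3
            rcases decomp_neg R S hR hS S₂ hS₂sub horth ⌈d.sum fun _ n => (n:ℝ)⌉₊ v hv d h1 h2 h3
                (Nat.le_ceil _) with h | h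
            · refine Or.inl ⟨hv, ?_⟩
              have hm : fz d ∈ Submodule.span ℝ S₁ := hspan_mem d S₁ fun γ hγ => ⟨h1 hγ, h γ hγ⟩
              rw [← h3] at hm
              simpa using Submodule.neg_mem _ hm
            · refine Or.inr ⟨hv, ?_⟩
              have hm : fz d ∈ Submodule.span ℝ S₂ := hspan_mem d S₂ h
              rw [← h3] at hm
              simpa using Submodule.neg_mem _ hm
        · intro v hv
          rcases hv with h | h
          · exact h.1
          · exact h.1
      have horth' : ∀ x ∈ T₁, ∀ y ∈ T₂, ⟪x, y⟫ = 0 := by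
        have hOrtho := Submodule.isOrtho_span (𝕜 := ℝ) (E := V) (s := S₁) (t := S₂)
          |>.2 (fun u hu v hv => horth u hu.1 hu.2 v hv)
        intro x hx y hy
        exact Submodule.isOrtho_iff_inner_eq.1 hOrtho x hx.2 y hy.2
      rcases hirr T₁ T₂ hcover horth' with h | h
      · have hθT₁ : θ ∈ T₁ := ⟨hθR, by
          rw [hceq]
          exact hspan_mem c S₁ fun γ hγ =>
            ⟨hcsupp hγ, fun hh => (Finsupp.mem_support_iff.1 hγ) hh.2⟩⟩
        exact hθne (h hθT₁)
      · have hαT₂ : α ∈ T₂ := ⟨hS.1 hα, Submodule.subset_span hαS₂⟩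
        exact hli.ne_zero ⟨α, hα⟩ (h hαT₂)
    have h0θ : prec S 0 θ := by
      show IsNonnegIntComb S (θ - 0)
      rw [sub_zero]
      exact ⟨c, hcsupp, hcpos, hceqraw⟩
    have hmaxall : ∀ β ∈ R, prec S β θ := by
      intro β hβ
      rcases hS.2.2.2 β hβ with hb | hb
      · obtain ⟨μ, hμR, hμge, hμmax⟩ := exists_max β hβ
        by_cases hμ0 : μ = 0
        · exact prec_trans β 0 θ (hμ0 ▸ hμge) h0θ
        · have hAμ := claimA μ hμR hμmax
          have hterms : ∀ γ ∈ c.support, 0 ≤ (c γ : ℝ) * ⟪γ, μ⟫ := by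
            intro γ hγ
            refine mul_nonneg (by exact_mod_cast hcpos γ) ?_
            rw [real_inner_comm]
            exact hAμ γ (hcsupp hγ)
          have hθμ : ⟪θ, μ⟫ = ∑ γ ∈ c.support, (c γ : ℝ) * ⟪γ, μ⟫ := by rw [hceq, inner_fz]
          by_cases hz : ⟪θ, μ⟫ = 0
          · exfalso
            have hsum0 : ∑ γ ∈ c.support, (c γ : ℝ) * ⟪γ, μ⟫ = 0 := by rw [← hθμ, hz]
            have hμorth : ∀ w ∈ S, ⟪w, μ⟫ = 0 := by
              intro w hw
              have hcw := claimB w hw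
              have hwsupp : w ∈ c.support := Finsupp.mem_support_iff.2 (by omega)
              have hh := (Finset.sum_eq_zero_iff_of_nonneg hterms).1 hsum0 w hwsupp
              rcases mul_eq_zero.1 hh with hh' | hh'
              · exfalso
                have hne : (c w : ℝ) ≠ 0 := by exact_mod_cast (by omega : c w ≠ 0)
                exact hne hh'
              · exact hh'
            have hle : Submodule.span ℝ S ≤ (ℝ ∙ μ)ᗮ :=
              Submodule.span_le.2 fun w hw =>
                Submodule.mem_orthogonal_singleton_iff_inner_left.2 (hμorth w hw)
            have hμmem : μ ∈ (ℝ ∙ μ)ᗮ := by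
              apply hle
              rw [hS.2.2.1]; trivial
            have hμμ : ⟪μ, μ⟫ = 0 :=
              Submodule.mem_orthogonal_singleton_iff_inner_left.1 hμmem
            exact hμ0 ((inner_self_eq_zero (𝕜 := ℝ)).1 hμμ)
          · have hpos : 0 < ⟪θ, μ⟫ :=
              lt_of_le_of_ne (by rw [hθμ]; exact Finset.sum_nonneg hterms) (Ne.symm hz)
            have hdiff : θ - μ ∈ R := (hax θ hθR μ hμR).2.1 hpos
            rcases hS.2.2.2 _ hdiff with hg | hg
            · have hpm : prec S μ θ := hg
              exact prec_trans β μ θ hμge hpm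
            · have hg' : IsNonnegIntComb S (-(θ - μ)) := hg
              have hpm : prec S θ μ := by
                show IsNonnegIntComb S (μ - θ)
                rwa [show μ - θ = -(θ - μ) by abel]
              have hμθ := hθmax μ hμR hpm
              rw [← hμθ]
              exact hμge
      · have hb0 : prec S β 0 := by
          show IsNonnegIntComb S (0 - β)
          rwa [zero_sub]
        exact prec_trans β 0 θ hb0 h0θ
    have huniq : ∀ y, (y ∈ R ∧ ∀ β ∈ R, prec S β y) → y = θ := by
      intro y hy
      exact prec_antisym y θ (hmaxall y hy.1) (hy.2 θ hθR)
    refine ⟨⟨θ, ⟨hθR, hmaxall⟩, huniq⟩, ?_⟩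
    intro θ' hθ'R hθ'max
    have hθ' : θ' = θ := huniq θ' ⟨hθ'R, hθ'max⟩
    exact ⟨c, hcsupp, claimB, by rw [hθ']; exact hceqraw⟩
end

section
/- Let (R,V) be a generalized root system and let α, β, γ ∈ R be such that γ + α + β ∈ R but α + β ∉ R. If γ + α ≠ 0, then γ + β ∈ R. -/
open scoped RealInnerProductSpace

variable {V : Type*} [NormedAddCommGroup V] [InnerProductSpace ℝ V] [FiniteDimensional ℝ V]

/-- If `α, β, γ, γ+α+β ∈ R`, `α+β ∉ R` and `γ+α ≠ 0`, then `γ+β ∈ R`. -/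
theorem stmt9 (R : Set V) (hR : IsGRS R) (α β γ : V)
    (hα : α ∈ R) (hβ : β ∈ R) (hγ : γ ∈ R) (hsum : γ + α + β ∈ R)
    (hab : α + β ∉ R) (hga : γ + α ≠ 0) : γ + β ∈ R := by
  by_contra hgb
  obtain ⟨-, -, -, hax⟩ := hR
  have hp : ¬ ⟪α, β⟫ < 0 := fun h => hab ((hax α hα β hβ).1 h)
  have hr : ¬ ⟪γ, β⟫ < 0 := fun h => hgb ((hax γ hγ β hβ).1 h)
  have h1 : ¬ 0 < ⟪γ + α + β, α⟫ := fun h => by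
    have hmem := (hax _ hsum α hα).2.1 h
    have : γ + α + β - α = γ + β := by abel
    rw [this] at hmem
    exact hgb hmem
  have h2 : ¬ 0 < ⟪γ + α + β, γ⟫ := fun h => by
    have hmem := (hax _ hsum γ hγ).2.1 h
    have : γ + α + β - γ = α + β := by abel
    rw [this] at hmem
    exact hab hmem
  have hpos : 0 < ⟪γ + α, γ + α⟫ := by
    rw [real_inner_self_eq_norm_sq]; exact pow_pos (norm_pos_iff.2 hga) 2
  have key : ⟪γ + α + β, α⟫ + ⟪γ + α + β, γ⟫
      = ⟪γ + α, γ + α⟫ + ⟪α, β⟫ + ⟪γ, β⟫ := by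
    simp only [inner_add_left, inner_add_right]
    rw [real_inner_comm β α, real_inner_comm β γ, real_inner_comm γ α]
    ring
  push_neg at hp hr h1 h2
  linarith
end

section
/- Let (R,V) be a generalized root system with base S, set R⁺ = R⁺(S), and let α ∈ S. Then the set P := (R⁺ \ {kα : k a positive integer}) ∪ ({kα : k a negative integer} ∩ R) is a positive system of R, and P = R⁺(S'), where S' := {−α} ∪ {β + q_β α : β ∈ S, β ≠ α} is a base of R and, for β ∈ S with β ≠ α, q_β denotes the largest integer q ≥ 0 such that β + qα ∈ R. -/
open scoped RealInnerProductSpace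

set_option linter.unusedSectionVars false
set_option linter.unusedTactic false
set_option linter.unusedVariables false
set_option maxHeartbeats 1000000

variable {V : Type*} [NormedAddCommGroup V] [InnerProductSpace ℝ V] [FiniteDimensional ℝ V]

section Aux

variable {R S : Set V}

lemma grs_zero_mem (hR : IsGRS R) : (0:V) ∈ R := by
  obtain ⟨γ, hγ⟩ := hR.1
  by_cases h : γ = 0
  · rwa [h] at hγ
  · have h2 := (hR.2.2.2 γ hγ γ hγ).2.1
    have hp : (0:ℝ) < ⟪γ,γ⟫ :=
      lt_of_le_of_ne real_inner_self_nonneg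
        (fun he => h (real_inner_self_nonpos.mp he.ge))
    simpa using h2 hp

lemma grs_neg_mem (hR : IsGRS R) {γ : V} (hγ : γ ∈ R) : -γ ∈ R := by
  have h0 : (0:V) ∈ R := grs_zero_mem hR
  have h := (hR.2.2.2 0 h0 γ hγ).2.2 (by simp)
  have : (0:V) + γ ∈ R := by simpa using hγ
  simpa using h.mp this

noncomputable def baseBasis (hS : IsBase R S) : Module.Basis ↥S ℝ V :=
  Module.Basis.mk hS.2.1 (by rw [Subtype.range_coe]; exact hS.2.2.1.ge)

lemma baseBasis_apply (hS : IsBase R S) (s : ↥S) : baseBasis hS s = ↑s :=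
  Module.Basis.mk_apply _ _ _

lemma baseBasis_repr_coe (hS : IsBase R S) (s : ↥S) :
    (baseBasis hS).repr ↑s = Finsupp.single s 1 := by
  conv_lhs => rw [← baseBasis_apply hS s]
  exact (baseBasis hS).repr_self s

lemma repr_intComb (hS : IsBase R S) (c : V →₀ ℤ) (hsupp : ↑c.support ⊆ S) (s : ↥S) :
    (baseBasis hS).repr (c.sum fun a n => (n:ℝ) • a) s = (c ↑s : ℝ) := by
  classical
  rw [Finsupp.sum, map_sum, Finsupp.coe_finset_sum, Finset.sum_apply]
  have h : ∀ a ∈ c.support,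
      ((baseBasis hS).repr ((c a : ℝ) • a)) s = if a = ↑s then (c a : ℝ) else 0 := by
    intro a ha
    have haS : a ∈ S := hsupp ha
    rw [map_smul]
    have : ((a : V)) = ((⟨a, haS⟩ : ↥S) : V) := rfl
    rw [this, baseBasis_repr_coe hS ⟨a, haS⟩]
    simp only [Finsupp.smul_apply, Finsupp.single_apply, smul_eq_mul]
    by_cases hh : (⟨a, haS⟩ : ↥S) = s
    · have ha' : a = ↑s := by rw [hh] at this; exact this
      simp [hh, ha']
    · have ha' : ¬ (a = ↑s) := fun hc => hh (Subtype.ext hc)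
      simp [hh, ha']
  rw [Finset.sum_congr rfl h]
  by_cases hmem : (↑s : V) ∈ c.support
  · rw [Finset.sum_ite_eq' c.support (↑s : V) (fun a => (c a : ℝ))]
    simp [hmem]
  · rw [Finset.sum_ite_eq' c.support (↑s : V) (fun a => (c a : ℝ))]
    simp only [hmem, if_false]
    have : c ↑s = 0 := Finsupp.notMem_support_iff.mp hmem
    simp [this]

lemma nic_repr (hS : IsBase R S) {v : V} (h : IsNonnegIntComb S v) (s : ↥S) :
    ∃ n : ℕ, (baseBasis hS).repr v s = (n : ℝ) := by
  obtain ⟨c, hsupp, hpos, rfl⟩ := h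
  refine ⟨(c ↑s).toNat, ?_⟩
  rw [repr_intComb hS c hsupp s]
  have := Int.toNat_of_nonneg (hpos ↑s)
  exact_mod_cast congrArg (fun k : ℤ => (k : ℝ)) this.symm

lemma nic_of_repr (hS : IsBase R S) [Fintype ↥S] {v : V}
    (h : ∀ s : ↥S, ∃ n : ℕ, (baseBasis hS).repr v s = (n : ℝ)) : IsNonnegIntComb S v := by
  choose N hN using h
  refine ⟨∑ s : ↥S, Finsupp.single (↑s : V) (N s : ℤ), ?_, ?_, ?_⟩
  · intro w hw
    classical
    have hw' := Finsupp.support_finset_sum (s := Finset.univ)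
      (f := fun s : ↥S => Finsupp.single (↑s : V) (N s : ℤ)) hw
    simp only [Finset.mem_biUnion, Finset.mem_univ, true_and] at hw'
    obtain ⟨s, hws⟩ := hw'
    have h2 := Finsupp.support_single_subset hws
    simp only [Finset.mem_singleton] at h2
    rw [h2]; exact s.2
  · intro w
    classical
    rw [Finsupp.finset_sum_apply]
    exact Finset.sum_nonneg fun s _ => by
      rw [Finsupp.single_apply]
      split <;> simp
  · rw [← Finsupp.sum_finset_sum_index (by intro a; simp) (by intro a n m; push_cast; rw [add_smul])]
    have : ∀ s : ↥S, (Finsupp.single (↑s : V) (N s : ℤ)).sum (fun a n => (n:ℝ) • a)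
        = (N s : ℝ) • (↑s : V) := by
      intro s
      rw [Finsupp.sum_single_index (by simp)]
      norm_cast
    rw [Finset.sum_congr rfl fun s _ => this s]
    have := (baseBasis hS).sum_repr v
    conv_lhs => rw [← this]
    refine Finset.sum_congr rfl fun s _ => ?_
    rw [hN s, baseBasis_apply]

end Aux

section Aux2

variable {R S : Set V}

lemma repr_expand (hS : IsBase R S) [Fintype ↥S] (v : V) :
    v = ∑ s : ↥S, (baseBasis hS).repr v s • (↑s : V) := by
  conv_lhs => rw [← (baseBasis hS).sum_repr v]
  exact Finset.sum_congr rfl fun s _ => by rw [baseBasis_apply]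

lemma repr_neg_nat {hS : IsBase R S} {γ : V} (h : IsNonnegIntComb S (-γ)) (s : ↥S) :
    ∃ n : ℕ, (baseBasis hS).repr γ s = -(n : ℝ) := by
  obtain ⟨n, hn⟩ := nic_repr hS h s
  refine ⟨n, ?_⟩
  rw [map_neg, Finsupp.neg_apply] at hn
  linarith

lemma no_mixed (hS : IsBase R S) {γ : V} (hγR : IsNonnegIntComb S γ ∨ IsNonnegIntComb S (-γ))
    {s t : ↥S} (h1 : 0 < (baseBasis hS).repr γ s) (h2 : (baseBasis hS).repr γ t < 0) : False := by
  rcases hγR with h | h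
  · obtain ⟨n, hn⟩ := nic_repr hS h t
    rw [hn] at h2
    have : (0:ℝ) ≤ n := by positivity
    linarith
  · obtain ⟨n, hn⟩ := repr_neg_nat h s
    rw [hn] at h1
    have : (0:ℝ) ≤ n := by positivity
    linarith

lemma nic_of_mem_pos (hS : IsBase R S) {γ : V} (hγ : γ ∈ R) {s : ↥S}
    (h : 0 < (baseBasis hS).repr γ s) : IsNonnegIntComb S γ := by
  rcases hS.2.2.2 γ hγ with hh | hh
  · exact hh
  · obtain ⟨n, hn⟩ := repr_neg_nat hh s
    rw [hn] at h
    have : (0:ℝ) ≤ n := by positivity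
    linarith

end Aux2

section Key

variable {R S : Set V}

lemma keyK (hR : IsGRS R) (hS : IsBase R S) [Fintype ↥S] [DecidableEq ↥S] {α : V} (hα : α ∈ S) (q : V → ℕ)
    (hq : ∀ β ∈ S, β ≠ α → β + (q β : ℝ) • α ∈ R ∧ ∀ n : ℕ, β + (n : ℝ) • α ∈ R → n ≤ q β) :
    ∀ (n : ℕ) (x : V), x ∈ R →
      (∀ s : ↥S, ∃ m : ℕ, (baseBasis hS).repr x s = (m : ℝ)) →
      (∃ s : ↥S, s ≠ ⟨α, hα⟩ ∧ (baseBasis hS).repr x s ≠ 0) →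
      (∑ s : ↥S, (baseBasis hS).repr x s ≤ (n : ℝ)) →
      ((∑ s ∈ Finset.univ.erase (⟨α, hα⟩ : ↥S), (q ↑s : ℝ) * (baseBasis hS).repr x s <
          (baseBasis hS).repr x ⟨α, hα⟩) ∨
       ((∑ s ∈ Finset.univ.erase (⟨α, hα⟩ : ↥S), (q ↑s : ℝ) * (baseBasis hS).repr x s =
          (baseBasis hS).repr x ⟨α, hα⟩) ∧ x + α ∈ R)) → False := by
  classical
  set b := baseBasis hS with hb
  set a : ↥S := ⟨α, hα⟩ with ha
  set A := Finset.univ.erase a with hAdef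
  intro n
  induction n with
  | zero =>
    intro x hxR hnat hex hht _
    obtain ⟨s₀, hs₀a, hs₀⟩ := hex
    obtain ⟨m, hm⟩ := hnat s₀
    have hm0 : m ≠ 0 := by rintro rfl; rw [hm] at hs₀; simp at hs₀
    have hnn : ∀ s : ↥S, 0 ≤ b.repr x s := fun s => by
      obtain ⟨k, hk⟩ := hnat s; rw [hk]; positivity
    have hle : (1:ℝ) ≤ b.repr x s₀ := by
      rw [hm]; exact_mod_cast Nat.one_le_iff_ne_zero.mpr hm0
    have := Finset.single_le_sum (f := fun s : ↥S => b.repr x s) (fun s _ => hnn s)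
      (Finset.mem_univ s₀)
    simp only [Nat.cast_zero] at hht
    linarith
  | succ n ih =>
    intro x hxR hnat hex hht hbad
    have hnn : ∀ s : ↥S, 0 ≤ b.repr x s := fun s => by
      obtain ⟨k, hk⟩ := hnat s; rw [hk]; positivity
    choose N hN using hnat
    obtain ⟨s₀, hs₀a, hs₀⟩ := hex
    have hs₀A : s₀ ∈ A := Finset.mem_erase.mpr ⟨hs₀a, Finset.mem_univ _⟩
    have hNs₀ : 1 ≤ N s₀ := Nat.one_le_iff_ne_zero.mpr
      (fun h => hs₀ (by rw [hN s₀, h]; norm_num))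
    have hαR : α ∈ R := hS.1 hα
    have hreprα : b.repr α = Finsupp.single a 1 := baseBasis_repr_coe hS a
    have hreprs : ∀ s : ↥S, b.repr ↑s = Finsupp.single s 1 := fun s => baseBasis_repr_coe hS s
    set hbar := ∑ s ∈ A, N s with hhbar
    have hbar1 : 1 ≤ hbar :=
      le_trans hNs₀ (Finset.single_le_sum (fun s _ => Nat.zero_le _) hs₀A)
    set Qn := ∑ s ∈ A, q ↑s * N s with hQn
    have hQx : ∑ s ∈ A, (q ↑s : ℝ) * b.repr x s = (Qn : ℝ) := by
      rw [hQn]; push_cast; exact Finset.sum_congr rfl fun s _ => by rw [hN s]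
    rcases eq_or_lt_of_le hbar1 with hbar_eq | hbar2
    · -- case h̄ = 1
      have huniq : ∀ s ∈ A, s ≠ s₀ → N s = 0 := by
        intro s hsA hne
        by_contra h0
        have h1 : 1 ≤ N s := Nat.one_le_iff_ne_zero.mpr h0
        have hsub : ({s₀, s} : Finset ↥S) ⊆ A := by
          intro t ht
          rcases Finset.mem_insert.mp ht with rfl | ht
          · exact hs₀A
          · rw [Finset.mem_singleton.mp ht]; exact hsA
        have hpair : N s₀ + N s ≤ hbar := by
          rw [hhbar, ← Finset.sum_pair (fun h => hne h.symm : s₀ ≠ s)]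
          exact Finset.sum_le_sum_of_subset hsub
        omega
      have hNs₀1 : N s₀ = 1 := by
        have h2 := Finset.single_le_sum (f := N) (fun s _ => Nat.zero_le _) hs₀A
        omega
      have hxeq : x = ↑s₀ + (N a : ℝ) • α := by
        conv_lhs => rw [repr_expand hS x]
        rw [← Finset.sum_erase_add Finset.univ _ (Finset.mem_univ a)]
        congr 1
        · rw [Finset.sum_eq_single_of_mem s₀ hs₀A ?_]
          · rw [hN s₀, hNs₀1]; norm_num
          · intro t htA htne; rw [hN t, huniq t htA htne]; norm_num
        · rw [hN a]
      have hs₀α : (↑s₀ : V) ≠ α := fun h => hs₀a (Subtype.ext h)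
      have hmax := (hq ↑s₀ s₀.2 hs₀α).2
      have hNa : N a ≤ q ↑s₀ := hmax (N a) (by rw [← hxeq]; exact hxR)
      have hQ1 : ∑ s ∈ A, (q ↑s:ℝ) * b.repr x s = (q ↑s₀ : ℝ) := by
        rw [Finset.sum_eq_single_of_mem s₀ hs₀A ?_]
        · rw [hN s₀, hNs₀1]; norm_num
        · intro t htA htne; rw [hN t, huniq t htA htne]; norm_num
      rcases hbad with hlt | ⟨heq, hy⟩
      · rw [hQ1, hN a] at hlt
        have : q ↑s₀ < N a := by exact_mod_cast hlt
        omega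
      · rw [hQ1, hN a] at heq
        have hqa : q ↑s₀ = N a := by exact_mod_cast heq
        have hy' : ↑s₀ + ((N a + 1 : ℕ) : ℝ) • α ∈ R := by
          push_cast
          rw [add_smul, one_smul, ← add_assoc, ← hxeq]
          exact hy
        have := hmax (N a + 1) hy'
        omega
    · -- case h̄ ≥ 2
      have hwitness : ∀ s₁ ∈ A, ∃ t : ↥S, t ≠ a ∧ N t ≠ (if s₁ = t then 1 else 0) := by
        intro s₁ hs₁A
        by_cases h2 : 2 ≤ N s₁
        · exact ⟨s₁, (Finset.mem_erase.mp hs₁A).1, by simp; omega⟩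
        · have hother : ∃ t ∈ A, t ≠ s₁ ∧ N t ≠ 0 := by
            by_contra hno
            push_neg at hno
            have : hbar = N s₁ := by
              rw [hhbar]
              rcases Finset.mem_erase.mp hs₁A with _
              exact Finset.sum_eq_single_of_mem s₁ hs₁A
                (fun t htA htne => hno t htA htne)
            omega
          obtain ⟨t, htA, hts, ht0⟩ := hother
          refine ⟨t, (Finset.mem_erase.mp htA).1, ?_⟩
          rw [if_neg (fun h => hts h.symm)]
          exact ht0
      have hx0 : x ≠ 0 := fun h => hs₀ (by rw [h, map_zero]; simp)
      have hxx : 0 < ⟪x, x⟫ :=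
        lt_of_le_of_ne real_inner_self_nonneg
          (fun he => hx0 (real_inner_self_nonpos.mp he.ge))
      have hexp : ⟪x, x⟫ = (∑ s ∈ A, b.repr x s * ⟪x, (↑s : V)⟫) + b.repr x a * ⟪x, α⟫ := by
        have h1 : ⟪x, x⟫ = ∑ s : ↥S, b.repr x s * ⟪x, (↑s:V)⟫ := by
          nth_rewrite 2 [repr_expand hS x]
          rw [inner_sum]
          exact Finset.sum_congr rfl fun s _ => real_inner_smul_right _ _ _
        rw [h1, ← Finset.sum_erase_add Finset.univ _ (Finset.mem_univ a)]
      rcases hbad with hlt | ⟨heq, hyR⟩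
      · -- strict case
        have hQlt : Qn < N a := by
          rw [hQx, hN a] at hlt; exact_mod_cast hlt
        have claim1 : ∀ s ∈ A, ⟪x, (↑s : V)⟫ ≤ 0 := by
          intro s hsA
          by_contra hc
          push_neg at hc
          have hxs : x - ↑s ∈ R := (hR.2.2.2 x hxR ↑s (hS.1 s.2)).2.1 hc
          have hrepr : ∀ t : ↥S, b.repr (x - ↑s) t = b.repr x t - (if s = t then 1 else 0) := by
            intro t
            rw [map_sub, Finsupp.sub_apply, hreprs s, Finsupp.single_apply]
          have hsa : s ≠ a := (Finset.mem_erase.mp hsA).1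
          by_cases hNs : N s = 0
          · have h1' : b.repr (x - ↑s) s < 0 := by
              rw [hrepr s, hN s, hNs, if_pos rfl]; norm_num
            have h2' : 0 < b.repr (x - ↑s) a := by
              rw [hrepr a, hN a, if_neg hsa]
              have : 0 < N a := by omega
              push_cast
              simpa using (by exact_mod_cast this : (0:ℝ) < (N a : ℝ))
            exact no_mixed hS (hS.2.2.2 _ hxs) h2' h1'
          · refine ih (x - ↑s) hxs ?_ ?_ ?_ ?_
            · intro t
              by_cases hts : s = t
              · refine ⟨N t - 1, ?_⟩
                rw [hrepr t, if_pos hts, hN t]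
                have h1 : 1 ≤ N t := by rw [← hts]; omega
                push_cast [Nat.cast_sub h1]
                ring
              · exact ⟨N t, by rw [hrepr t, if_neg hts, hN t]; ring⟩
            · obtain ⟨t, hta, htne⟩ := hwitness s hsA
              refine ⟨t, hta, ?_⟩
              rw [hrepr t, hN t]
              intro h
              apply htne
              by_cases hts : s = t
              · rw [if_pos hts] at h ⊢
                exact_mod_cast (by linarith : (N t:ℝ) = 1)
              · rw [if_neg hts] at h ⊢
                exact_mod_cast (by linarith : (N t:ℝ) = 0)
            · have hsum : ∑ t : ↥S, b.repr (x - ↑s) t = (∑ t : ↥S, b.repr x t) - 1 := by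
                rw [Finset.sum_congr rfl (fun t _ => hrepr t), Finset.sum_sub_distrib]
                congr 1
                rw [Finset.sum_ite_eq Finset.univ s (fun _ => (1:ℝ))]
                simp
              rw [hsum]
              push_cast at hht ⊢
              linarith
            · left
              have hQ' : ∑ t ∈ A, (q ↑t:ℝ) * b.repr (x - ↑s) t
                  = (∑ t ∈ A, (q ↑t:ℝ) * b.repr x t) - q ↑s := by
                have hstep : ∀ t ∈ A, (q ↑t:ℝ) * b.repr (x - ↑s) t
                    = (q ↑t:ℝ) * b.repr x t - (if s = t then (q ↑t:ℝ) else 0) := by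
                  intro t _
                  rw [hrepr t]
                  split <;> ring
                rw [Finset.sum_congr rfl hstep, Finset.sum_sub_distrib]
                congr 1
                rw [Finset.sum_ite_eq A s (fun t : ↥S => (q ↑t:ℝ))]
                simp [hsA]
              rw [hQ', hrepr a, if_neg hsa]
              have hq0 : (0:ℝ) ≤ q ↑s := by positivity
              linarith
        have claim2 : 0 < ⟪x, α⟫ := by
          have hA_nonpos : ∑ s ∈ A, b.repr x s * ⟪x, (↑s:V)⟫ ≤ 0 :=
            Finset.sum_nonpos fun s hsA => mul_nonpos_of_nonneg_of_nonpos (hnn s) (claim1 s hsA)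
          have hprod : 0 < b.repr x a * ⟪x, α⟫ := by linarith [hexp]
          by_contra hcon
          push_neg at hcon
          have : b.repr x a * ⟪x, α⟫ ≤ 0 := mul_nonpos_of_nonneg_of_nonpos (hnn a) hcon
          linarith
        have hxa : x - α ∈ R := (hR.2.2.2 x hxR α hαR).2.1 claim2
        have hrepra : ∀ t : ↥S, b.repr (x - α) t = b.repr x t - (if a = t then 1 else 0) := by
          intro t
          rw [map_sub, Finsupp.sub_apply, hreprα, Finsupp.single_apply]
        refine ih (x - α) hxa ?_ ?_ ?_ ?_
        · intro t
          by_cases hta : a = t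
          · refine ⟨N t - 1, ?_⟩
            rw [hrepra t, if_pos hta, hN t]
            have h1 : 1 ≤ N t := by rw [← hta]; omega
            push_cast [Nat.cast_sub h1]
            ring
          · exact ⟨N t, by rw [hrepra t, if_neg hta, hN t]; ring⟩
        · exact ⟨s₀, hs₀a, by
            rw [hrepra s₀, if_neg (fun h => hs₀a h.symm), sub_zero]; exact hs₀⟩
        · have hsum : ∑ t : ↥S, b.repr (x - α) t = (∑ t : ↥S, b.repr x t) - 1 := by
            rw [Finset.sum_congr rfl (fun t _ => hrepra t), Finset.sum_sub_distrib]
            congr 1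
            rw [Finset.sum_ite_eq Finset.univ a (fun _ => (1:ℝ))]
            simp
          rw [hsum]
          push_cast at hht ⊢
          linarith
        · have hQsame : ∑ t ∈ A, (q ↑t:ℝ) * b.repr (x-α) t
              = ∑ t ∈ A, (q ↑t:ℝ) * b.repr x t := by
            refine Finset.sum_congr rfl fun t htA => ?_
            rw [hrepra t, if_neg (fun h => (Finset.mem_erase.mp htA).1 h.symm)]
            ring
          have hcfa : b.repr (x - α) a = (N a:ℝ) - 1 := by
            rw [hrepra a, if_pos rfl, hN a]
          by_cases hgt : Qn + 1 < N a
          · left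
            rw [hQsame, hQx, hcfa]
            have : (Qn:ℝ) + 1 < (N a:ℝ) := by exact_mod_cast hgt
            linarith
          · right
            constructor
            · rw [hQsame, hQx, hcfa]
              have : N a = Qn + 1 := by omega
              rw [this]; push_cast; ring
            · rw [sub_add_cancel]; exact hxR
      · -- equality case
        have hNaQ : N a = Qn := by
          rw [hQx, hN a] at heq; exact_mod_cast heq.symm
        have hexp2 : ⟪x,x⟫ = ∑ s ∈ A, b.repr x s * ⟪x, (↑s:V) + (q ↑s:ℝ) • α⟫ := by
          rw [hexp, ← heq, Finset.sum_mul, ← Finset.sum_add_distrib]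
          refine Finset.sum_congr rfl fun s hsA => ?_
          rw [inner_add_right, real_inner_smul_right]
          ring
        have hterm : ∃ s₁ ∈ A, 0 < b.repr x s₁ * ⟪x, (↑s₁:V) + (q ↑s₁:ℝ) • α⟫ := by
          by_contra hno
          push_neg at hno
          have : ⟪x,x⟫ ≤ 0 := hexp2 ▸ Finset.sum_nonpos hno
          linarith
        obtain ⟨s₁, hs₁A, hprod⟩ := hterm
        set s' : V := (↑s₁:V) + (q ↑s₁:ℝ) • α with hs'def
        have hs₁a : s₁ ≠ a := (Finset.mem_erase.mp hs₁A).1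
        have hs₁α : (↑s₁:V) ≠ α := fun h => hs₁a (Subtype.ext h)
        have hcf1 : 0 < b.repr x s₁ :=
          lt_of_le_of_ne (hnn s₁) (fun h => by rw [← h] at hprod; simp at hprod)
        have hips' : 0 < ⟪x, s'⟫ := by
          rcases mul_pos_iff.mp hprod with ⟨_, h⟩ | ⟨h, _⟩
          · exact h
          · linarith
        have hNs₁ : 1 ≤ N s₁ := by
          rw [hN s₁] at hcf1
          have : 0 < N s₁ := by exact_mod_cast hcf1
          omega
        have hs'R : s' ∈ R := (hq ↑s₁ s₁.2 hs₁α).1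
        have hvR : x - s' ∈ R := (hR.2.2.2 x hxR s' hs'R).2.1 hips'
        have hs'α : 0 ≤ ⟪s', α⟫ := by
          by_contra hcon
          push_neg at hcon
          have hadd : s' + α ∈ R := (hR.2.2.2 s' hs'R α hαR).1 hcon
          have hmem : (↑s₁:V) + ((q ↑s₁ + 1 : ℕ):ℝ) • α ∈ R := by
            push_cast
            rw [add_smul, one_smul, ← add_assoc]
            exact hadd
          have := (hq ↑s₁ s₁.2 hs₁α).2 _ hmem
          omega
        have hvαR : (x - s') + α ∈ R := by
          have hyi : 0 < ⟪x + α, s'⟫ := by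
            rw [inner_add_left]
            have hcm : ⟪α, s'⟫ = ⟪s', α⟫ := real_inner_comm _ _
            linarith
          have hsub := (hR.2.2.2 (x+α) hyR s' hs'R).2.1 hyi
          have heqv : x + α - s' = (x - s') + α := by abel
          rwa [heqv] at hsub
        have hreprs' : ∀ t : ↥S, b.repr (x - s') t
            = b.repr x t - ((if s₁ = t then 1 else 0) + (q ↑s₁:ℝ) * (if a = t then 1 else 0)) := by
          intro t
          rw [map_sub, Finsupp.sub_apply, hs'def, map_add, map_smul, hreprs s₁, hreprα]
          rw [Finsupp.add_apply, Finsupp.smul_apply, Finsupp.single_apply, Finsupp.single_apply]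
          simp [smul_eq_mul]
        have hqQn : q ↑s₁ ≤ Qn := by
          rw [hQn]
          calc q ↑s₁ ≤ q ↑s₁ * N s₁ := Nat.le_mul_of_pos_right _ (by omega)
            _ ≤ ∑ t ∈ A, q ↑t * N t :=
              Finset.single_le_sum (f := fun t : ↥S => q ↑t * N t)
                (fun t _ => Nat.zero_le _) hs₁A
        refine ih (x - s') hvR ?_ ?_ ?_ ?_
        · intro t
          by_cases ht1 : s₁ = t
          · refine ⟨N t - 1, ?_⟩
            rw [hreprs' t, if_pos ht1, if_neg (by rw [← ht1]; exact fun h => hs₁a h.symm), hN t]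
            have h1 : 1 ≤ N t := by rw [← ht1]; omega
            push_cast [Nat.cast_sub h1]
            ring
          · by_cases hta : a = t
            · refine ⟨N t - q ↑s₁, ?_⟩
              rw [hreprs' t, if_neg ht1, if_pos hta, hN t]
              have h1 : q ↑s₁ ≤ N t := by rw [← hta]; omega
              push_cast [Nat.cast_sub h1]
              ring
            · exact ⟨N t, by rw [hreprs' t, if_neg ht1, if_neg hta, hN t]; ring⟩
        · obtain ⟨t, hta, htne⟩ := hwitness s₁ hs₁A
          refine ⟨t, hta, ?_⟩
          rw [hreprs' t, show (if a = t then (1:ℝ) else 0) = 0 from if_neg (fun h => hta h.symm),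
            hN t]
          intro h
          apply htne
          by_cases ht1 : s₁ = t
          · rw [if_pos ht1] at h ⊢
            exact_mod_cast (by linarith : (N t:ℝ) = 1)
          · rw [if_neg ht1] at h ⊢
            exact_mod_cast (by linarith : (N t:ℝ) = 0)
        · have hsum : ∑ t : ↥S, b.repr (x - s') t
              = (∑ t : ↥S, b.repr x t) - (1 + (q ↑s₁:ℝ)) := by
            rw [Finset.sum_congr rfl (fun t _ => hreprs' t), Finset.sum_sub_distrib]
            congr 1
            rw [Finset.sum_add_distrib]
            congr 1
            · rw [Finset.sum_ite_eq Finset.univ s₁ (fun _ => (1:ℝ))]; simp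
            · rw [← Finset.mul_sum, Finset.sum_ite_eq Finset.univ a (fun _ => (1:ℝ))]; simp
          rw [hsum]
          push_cast at hht ⊢
          have : (0:ℝ) ≤ q ↑s₁ := by positivity
          linarith
        · right
          constructor
          · have hQ' : ∑ t ∈ A, (q ↑t:ℝ) * b.repr (x - s') t
                = (∑ t ∈ A, (q ↑t:ℝ) * b.repr x t) - q ↑s₁ := by
              have hstep : ∀ t ∈ A, (q ↑t:ℝ) * b.repr (x - s') t
                  = (q ↑t:ℝ) * b.repr x t - (if s₁ = t then (q ↑t:ℝ) else 0) := by
                intro t htA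
                rw [hreprs' t, show (if a = t then (1:ℝ) else 0) = 0 from
                  if_neg (fun h => (Finset.mem_erase.mp htA).1 h.symm)]
                split <;> ring
              rw [Finset.sum_congr rfl hstep, Finset.sum_sub_distrib]
              congr 1
              rw [Finset.sum_ite_eq A s₁ (fun t : ↥S => (q ↑t:ℝ))]
              simp [hs₁A]
            rw [hQ', hQx]
            have hcfa : b.repr (x - s') a = (Qn:ℝ) - q ↑s₁ := by
              rw [hreprs' a, if_neg (fun h => hs₁a h), if_pos rfl, hN a, hNaQ]
              ring
            rw [hcfa]
          · exact hvαR

end Key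

section Refl

variable {R S : Set V}

open Classical in
noncomputable def reflMap (hS : IsBase R S) (α : V) (q : V → ℕ) : V →ₗ[ℝ] V :=
  (baseBasis hS).constr ℝ (fun s : ↥S => if (s : V) = α then -α else ↑s + (q ↑s : ℝ) • α)

open Classical in
lemma reflMap_coe (hS : IsBase R S) (α : V) (q : V → ℕ) (s : ↥S) :
    reflMap hS α q ↑s = if (s : V) = α then -α else ↑s + (q ↑s : ℝ) • α := by
  conv_lhs => rw [← baseBasis_apply hS s]
  exact Module.Basis.constr_basis _ _ _ _

lemma reflMap_alpha (hS : IsBase R S) {α : V} (hα : α ∈ S) (q : V → ℕ) :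
    reflMap hS α q α = -α := by
  have := reflMap_coe hS α q ⟨α, hα⟩
  rwa [if_pos rfl] at this

lemma reflMap_other (hS : IsBase R S) {α β : V} (hβ : β ∈ S) (hne : β ≠ α) (q : V → ℕ) :
    reflMap hS α q β = β + (q β : ℝ) • α := by
  have := reflMap_coe hS α q ⟨β, hβ⟩
  rwa [if_neg hne] at this

lemma reflMap_invol (hS : IsBase R S) {α : V} (hα : α ∈ S) (q : V → ℕ) :
    ∀ v, reflMap hS α q (reflMap hS α q v) = v := by
  have h : (reflMap hS α q).comp (reflMap hS α q) = LinearMap.id := by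
    apply (baseBasis hS).ext
    intro s
    rw [baseBasis_apply hS s]
    simp only [LinearMap.comp_apply, LinearMap.id_apply]
    by_cases hs : (s : V) = α
    · rw [hs, reflMap_alpha hS hα q, map_neg, reflMap_alpha hS hα q, neg_neg]
    · rw [reflMap_other hS s.2 hs q, map_add, map_smul, reflMap_other hS s.2 hs q,
        reflMap_alpha hS hα q]
      rw [smul_neg]
      abel
  intro v
  exact congrArg (fun f : V →ₗ[ℝ] V => f v) h

lemma reflMap_bij (hS : IsBase R S) {α : V} (hα : α ∈ S) (q : V → ℕ) :
    Function.Bijective (reflMap hS α q) :=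
  Function.Involutive.bijective (reflMap_invol hS hα q)

lemma reflMap_image (hS : IsBase R S) {α : V} (hα : α ∈ S) (q : V → ℕ) :
    reflMap hS α q '' S = insert (-α) ((fun β => β + (q β : ℝ) • α) '' (S \ {α})) := by
  ext v
  constructor
  · rintro ⟨w, hw, rfl⟩
    by_cases hwα : w = α
    · subst hwα
      rw [reflMap_alpha hS hα q]
      exact Set.mem_insert _ _
    · rw [reflMap_other hS hw hwα q]
      exact Set.mem_insert_of_mem _ ⟨w, ⟨hw, hwα⟩, rfl⟩
  · intro hv
    rcases Set.mem_insert_iff.mp hv with rfl | ⟨w, ⟨hw, hwα⟩, rfl⟩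
    · exact ⟨α, hα, reflMap_alpha hS hα q⟩
    · exact ⟨w, hw, reflMap_other hS hw hwα q⟩

lemma reflBase_span (hS : IsBase R S) {α : V} (hα : α ∈ S) (q : V → ℕ) :
    Submodule.span ℝ (insert (-α) ((fun β => β + (q β : ℝ) • α) '' (S \ {α}))) = ⊤ := by
  rw [← reflMap_image hS hα q, Submodule.span_image, hS.2.2.1, Submodule.map_top,
    LinearMap.range_eq_top.mpr (reflMap_bij hS hα q).2]

lemma reflBase_linIndep (hS : IsBase R S) {α : V} (hα : α ∈ S) (q : V → ℕ) :
    LinearIndependent ℝ ((↑) : ↥(insert (-α) ((fun β => β + (q β : ℝ) • α) '' (S \ {α}))) → V) := by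
  rw [← reflMap_image hS hα q]
  exact LinearIndepOn.image (f := reflMap hS α q) hS.2.1
    (by rw [LinearMap.ker_eq_bot.mpr (reflMap_bij hS hα q).1]; exact disjoint_bot_right)

end Refl

section NicUtil

variable {R S : Set V}

lemma nic_zero (T : Set V) : IsNonnegIntComb T (0 : V) :=
  ⟨0, by simp, fun _ => le_refl 0, by simp⟩

lemma nic_add {T : Set V} {x y : V} (hx : IsNonnegIntComb T x) (hy : IsNonnegIntComb T y) :
    IsNonnegIntComb T (x + y) := by
  classical
  obtain ⟨c, hcs, hcp, rfl⟩ := hx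
  obtain ⟨d, hds, hdp, rfl⟩ := hy
  refine ⟨c + d, ?_, fun w => ?_, ?_⟩
  · intro w hw
    rcases Finset.mem_union.mp (Finsupp.support_add hw) with h | h
    · exact hcs h
    · exact hds h
  · rw [Finsupp.add_apply]; exact add_nonneg (hcp w) (hdp w)
  · rw [Finsupp.sum_add_index' (fun a => by simp) (fun a n m => by push_cast; rw [add_smul])]

lemma nic_smul_mem {T : Set V} {v : V} (hv : v ∈ T) {k : ℤ} (hk : 0 ≤ k) :
    IsNonnegIntComb T ((k : ℝ) • v) := by
  refine ⟨Finsupp.single v k, ?_, fun w => ?_, ?_⟩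
  · intro w hw
    have := Finsupp.support_single_subset hw
    rw [Finset.mem_singleton] at this
    rw [this]; exact hv
  · classical
    rw [Finsupp.single_apply]
    split
    · exact hk
    · exact le_refl 0
  · rw [Finsupp.sum_single_index (by simp)]

lemma repr_all_zero_eq_zero (hS : IsBase R S) {x : V}
    (h : ∀ s : ↥S, (baseBasis hS).repr x s = 0) : x = 0 := by
  have h0 : (baseBasis hS).repr x = 0 := Finsupp.ext fun s => h s
  have := congrArg (baseBasis hS).repr.symm h0
  simpa using this

end NicUtil

section Convert

variable {R S : Set V}

lemma pos_to_refl [Fintype ↥S] [DecidableEq ↥S] (hR : IsGRS R) (hS : IsBase R S) {α : V}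
    (hα : α ∈ S) (q : V → ℕ)
    (hq : ∀ β ∈ S, β ≠ α → β + (q β : ℝ) • α ∈ R ∧ ∀ n : ℕ, β + (n : ℝ) • α ∈ R → n ≤ q β)
    {x : V} (hxR : x ∈ R) (hnic : IsNonnegIntComb S x)
    (hnm : ¬ ∃ k : ℤ, 0 < k ∧ x = (k : ℝ) • α) :
    IsNonnegIntComb (insert (-α) ((fun β => β + (q β : ℝ) • α) '' (S \ {α}))) x := by
  classical
  set b := baseBasis hS with hb
  set a : ↥S := ⟨α, hα⟩ with ha
  set A := Finset.univ.erase a with hAdef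
  choose N hN using fun s => nic_repr hS hnic s
  have hxeq : x = (∑ s ∈ A, (N s : ℝ) • (↑s : V)) + (N a : ℝ) • α := by
    conv_lhs => rw [repr_expand hS x]
    rw [← Finset.sum_erase_add Finset.univ _ (Finset.mem_univ a)]
    congr 1
    · exact Finset.sum_congr rfl fun s _ => by rw [hN s]
    · rw [hN a]
  by_cases hex : ∃ s : ↥S, s ≠ a ∧ b.repr x s ≠ 0
  · have hQle : b.repr x a ≤ ∑ s ∈ A, (q ↑s : ℝ) * b.repr x s := by
      by_contra hc
      push_neg at hc
      exact keyK hR hS hα q hq (∑ s : ↥S, N s) x hxR (fun s => ⟨N s, hN s⟩) hex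
        (le_of_eq (by push_cast; exact Finset.sum_congr rfl fun s _ => hN s))
        (Or.inl hc)
    set Qn := ∑ s ∈ A, q ↑s * N s with hQn
    have hQx : ∑ s ∈ A, (q ↑s : ℝ) * b.repr x s = (Qn : ℝ) := by
      rw [hQn]; push_cast; exact Finset.sum_congr rfl fun s _ => by rw [hN s]
    have hNa : N a ≤ Qn := by
      rw [hQx, hN a] at hQle; exact_mod_cast hQle
    refine ⟨Finsupp.single (-α) ((Qn : ℤ) - (N a : ℤ))
      + ∑ s ∈ A, Finsupp.single ((↑s : V) + (q ↑s : ℝ) • α) (N s : ℤ), ?_, ?_, ?_⟩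
    · intro w hw
      rcases Finset.mem_union.mp (Finsupp.support_add hw) with h | h
      · have h1 := Finsupp.support_single_subset h
        rw [Finset.mem_singleton] at h1
        rw [h1]; exact Set.mem_insert _ _
      · have h2 := Finsupp.support_finset_sum h
        simp only [Finset.mem_biUnion] at h2
        obtain ⟨s, hsA, hws⟩ := h2
        have h3 := Finsupp.support_single_subset hws
        rw [Finset.mem_singleton] at h3
        rw [h3]
        refine Set.mem_insert_of_mem _ ⟨↑s, ⟨s.2, ?_⟩, rfl⟩
        exact fun h => (Finset.mem_erase.mp hsA).1 (Subtype.ext h)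
    · intro w
      rw [Finsupp.add_apply, Finsupp.finset_sum_apply]
      refine add_nonneg ?_ (Finset.sum_nonneg fun s _ => ?_)
      · rw [Finsupp.single_apply]
        split
        · omega
        · exact le_refl 0
      · rw [Finsupp.single_apply]
        split
        · exact Int.natCast_nonneg _
        · exact le_refl 0
    · rw [Finsupp.sum_add_index' (fun w => by simp) (fun w n m => by push_cast; rw [add_smul]),
        Finsupp.sum_single_index (by simp),
        ← Finsupp.sum_finset_sum_index (fun w => by simp)
          (fun w n m => by push_cast; rw [add_smul]),
        Finset.sum_congr rfl (fun s _ =>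
          Finsupp.sum_single_index (h := fun (w : V) (n : ℤ) => (n : ℝ) • w) (by simp))]
      rw [hxeq]
      have h1 : ∀ s ∈ A, ((N s : ℤ) : ℝ) • ((↑s : V) + (q ↑s : ℝ) • α)
          = (N s : ℝ) • (↑s : V) + ((N s * q ↑s : ℕ) : ℝ) • α := by
        intro s _
        push_cast
        rw [smul_add, smul_smul]
      rw [Finset.sum_congr rfl h1, Finset.sum_add_distrib, ← Finset.sum_smul]
      have h2 : (∑ s ∈ A, ((N s * q ↑s : ℕ) : ℝ)) = (Qn : ℝ) := by
        rw [hQn]; push_cast; exact Finset.sum_congr rfl fun s _ => by ring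
      rw [h2]
      push_cast
      rw [smul_neg, sub_smul]
      abel
  · push_neg at hex
    have hxa : x = (N a : ℝ) • α := by
      rw [hxeq, Finset.sum_eq_zero, zero_add]
      intro s hs
      have hz := hex s (Finset.mem_erase.mp hs).1
      rw [hN s] at hz
      rw [hz, zero_smul]
    rcases Nat.eq_zero_or_pos (N a) with h0 | hpos
    · have : x = 0 := by rw [hxa, h0]; simp
      rw [this]; exact nic_zero _
    · exact absurd ⟨(N a : ℤ), by exact_mod_cast hpos, by rw [hxa]; norm_num⟩ hnm

lemma refl_to_pos [Fintype ↥S] [DecidableEq ↥S] (hS : IsBase R S) {α : V}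
    (hα : α ∈ S) (q : V → ℕ) {x : V} (hxR : x ∈ R)
    (hnic : IsNonnegIntComb (insert (-α) ((fun β => β + (q β : ℝ) • α) '' (S \ {α}))) x) :
    (IsNonnegIntComb S x ∧ ¬ ∃ k : ℤ, 0 < k ∧ x = (k : ℝ) • α) ∨
      (∃ k : ℤ, k < 0 ∧ x = (k : ℝ) • α) := by
  classical
  set b := baseBasis hS with hb
  set a : ↥S := ⟨α, hα⟩ with ha
  have hα0 : α ≠ 0 := hS.2.1.ne_zero ⟨α, hα⟩
  have hreprα : b.repr α = Finsupp.single a 1 := baseBasis_repr_coe hS a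
  obtain ⟨c, hcs, hcp, hsum⟩ := hnic
  have hrepr : ∀ s : ↥S, b.repr x s = ∑ w ∈ c.support, (c w : ℝ) * b.repr w s := by
    intro s
    conv_lhs => rw [hsum]
    rw [Finsupp.sum, map_sum, Finsupp.coe_finset_sum, Finset.sum_apply]
    exact Finset.sum_congr rfl fun w _ => by rw [map_smul]; rfl
  have fact1 : ∀ w ∈ c.support, ∀ s : ↥S, s ≠ a → 0 ≤ b.repr w s := by
    intro w hw s hs
    rcases Set.mem_insert_iff.mp (hcs hw) with rfl | ⟨t, ⟨htS, htα⟩, rfl⟩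
    · rw [map_neg, Finsupp.neg_apply, hreprα, Finsupp.single_apply,
        if_neg (fun h => hs h.symm)]
      norm_num
    · rw [map_add, map_smul, hreprα, baseBasis_repr_coe hS ⟨t, htS⟩]
      rw [Finsupp.add_apply, Finsupp.smul_apply, Finsupp.single_apply, Finsupp.single_apply,
        show (if a = s then (1:ℝ) else 0) = 0 from if_neg (fun h => hs h.symm)]
      split <;> simp
  have hxnn : ∀ s : ↥S, s ≠ a → 0 ≤ b.repr x s := by
    intro s hs
    rw [hrepr s]
    exact Finset.sum_nonneg fun w hw =>
      mul_nonneg (by exact_mod_cast hcp w) (fact1 w hw s hs)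
  by_cases hex : ∃ s : ↥S, s ≠ a ∧ 0 < b.repr x s
  · left
    obtain ⟨s, hsa, hpos⟩ := hex
    refine ⟨nic_of_mem_pos hS hxR hpos, ?_⟩
    rintro ⟨k, hk, hkx⟩
    have hz : b.repr x s = 0 := by
      rw [hkx, map_smul, hreprα, Finsupp.smul_apply, Finsupp.single_apply,
        if_neg (fun h => hsa h.symm)]
      simp
    rw [hz] at hpos
    exact lt_irrefl 0 hpos
  · push_neg at hex
    have hz : ∀ s : ↥S, s ≠ a → b.repr x s = 0 := fun s hs =>
      le_antisymm (hex s hs) (hxnn s hs)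
    have hsupp1 : ∀ w ∈ c.support, w = -α := by
      intro w hw
      rcases Set.mem_insert_iff.mp (hcs hw) with h | ⟨t, ⟨htS, htα⟩, rfl⟩
      · exact h
      · exfalso
        set s : ↥S := ⟨t, htS⟩ with hsdef
        have hsa : s ≠ a := fun h => htα (by
          have := congrArg (fun u : ↥S => (u : V)) h
          simpa using this)
        have h1 : b.repr (t + (q t : ℝ) • α) s = 1 := by
          rw [map_add, map_smul, hreprα, baseBasis_repr_coe hS ⟨t, htS⟩]
          rw [Finsupp.add_apply, Finsupp.smul_apply, Finsupp.single_apply, Finsupp.single_apply,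
            show (if a = s then (1:ℝ) else 0) = 0 from if_neg (fun h => hsa h.symm),
            if_pos rfl]
          simp
        have hcw : (0 : ℝ) < (c (t + (q t : ℝ) • α) : ℝ) := by
          have hne := Finsupp.mem_support_iff.mp hw
          have := hcp (t + (q t : ℝ) • α)
          exact_mod_cast lt_of_le_of_ne this (fun h => hne h.symm)
        have hposx : 0 < b.repr x s := by
          rw [hrepr s]
          refine Finset.sum_pos' (fun w' hw' => mul_nonneg (by exact_mod_cast hcp w')
            (fact1 w' hw' s hsa)) ⟨_, hw, ?_⟩
          rw [h1, mul_one]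
          exact hcw
        rw [hz s hsa] at hposx
        exact lt_irrefl 0 hposx
    have hxval : x = ((c (-α) : ℤ) : ℝ) • (-α) := by
      rw [hsum, Finsupp.sum]
      rcases Finset.subset_singleton_iff.mp
        (fun w hw => Finset.mem_singleton.mpr (hsupp1 w hw)) with h | h
      · have hc0 : c = 0 := Finsupp.support_eq_empty.mp h
        rw [h, hc0]
        simp
      · rw [h, Finset.sum_singleton]
    rcases lt_or_eq_of_le (hcp (-α)) with hpos | heq0
    · right
      refine ⟨-(c (-α)), by omega, ?_⟩
      rw [hxval]
      push_cast
      rw [smul_neg, neg_smul]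
    · left
      have hx0 : x = 0 := by rw [hxval, ← heq0]; simp
      refine ⟨by rw [hx0]; exact nic_zero _, ?_⟩
      rintro ⟨k, hk, hkx⟩
      rw [hx0] at hkx
      have : α = 0 := by
        have hk0 : (k : ℝ) ≠ 0 := by exact_mod_cast hk.ne'
        have := hkx.symm
        exact (smul_eq_zero.mp this).resolve_left hk0
      exact hα0 this

end Convert

/-- Reflecting a positive system in a simple root `α`: the set
`P = (R⁺ \ ℤ_{>0}α) ∪ (ℤ_{<0}α ∩ R)` is a positive system, equal to `R⁺(S')` where
`S' = {-α} ∪ {β + q_β α : β ∈ S \ {α}}` is a base of `R` and `q_β` is the largest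
integer `q ≥ 0` with `β + qα ∈ R`. -/
theorem stmt10 (R S : Set V) (hR : IsGRS R) (hS : IsBase R S) (α : V) (hα : α ∈ S)
    (q : V → ℕ)
    (hq : ∀ β ∈ S, β ≠ α →
      β + (q β : ℝ) • α ∈ R ∧ ∀ n : ℕ, β + (n : ℝ) • α ∈ R → n ≤ q β) :
    IsPositiveSystem R
      ((posRoots R S \ {v | ∃ k : ℤ, 0 < k ∧ v = (k : ℝ) • α}) ∪
        ({v | ∃ k : ℤ, k < 0 ∧ v = (k : ℝ) • α} ∩ R)) ∧
    IsBase R (insert (-α) ((fun β => β + (q β : ℝ) • α) '' (S \ {α}))) ∧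
    (posRoots R S \ {v | ∃ k : ℤ, 0 < k ∧ v = (k : ℝ) • α}) ∪
        ({v | ∃ k : ℤ, k < 0 ∧ v = (k : ℝ) • α} ∩ R) =
      posRoots R (insert (-α) ((fun β => β + (q β : ℝ) • α) '' (S \ {α}))) := by
  classical
  haveI : Fintype ↥S := (Set.Finite.subset hR.2.1 hS.1).fintype
  set S' := insert (-α) ((fun β => β + (q β : ℝ) • α) '' (S \ {α})) with hS'def
  set Mset := {v : V | ∃ k : ℤ, 0 < k ∧ v = (k : ℝ) • α} with hMdef
  set Nset := {v : V | ∃ k : ℤ, k < 0 ∧ v = (k : ℝ) • α} with hNdef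
  set P := (posRoots R S \ Mset) ∪ (Nset ∩ R) with hPdef
  have hαR : α ∈ R := hS.1 hα
  have hnegαR : -α ∈ R := grs_neg_mem hR hαR
  have hS'R : S' ⊆ R := by
    intro v hv
    rcases Set.mem_insert_iff.mp hv with rfl | ⟨w, ⟨hw, hwα⟩, rfl⟩
    · exact hnegαR
    · exact (hq w hw hwα).1
  have hPeq : P = posRoots R S' := by
    ext x
    constructor
    · intro hx
      rcases hx with ⟨⟨hxR, hxnic⟩, hxm⟩ | ⟨⟨k, hk, hkx⟩, hxR⟩
      · exact ⟨hxR, pos_to_refl hR hS hα q hq hxR hxnic hxm⟩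
      · refine ⟨hxR, ?_⟩
        have hx' : x = ((-k : ℤ) : ℝ) • (-α) := by
          rw [hkx]; push_cast; rw [smul_neg, neg_smul, neg_neg]
        rw [hx']
        exact nic_smul_mem (Set.mem_insert _ _) (by omega)
    · rintro ⟨hxR, hxnic⟩
      rcases refl_to_pos hS hα q hxR hxnic with ⟨h1, h2⟩ | h
      · exact Or.inl ⟨⟨hxR, h1⟩, h2⟩
      · exact Or.inr ⟨h, hxR⟩
  have hbase : IsBase R S' := by
    refine ⟨hS'R, reflBase_linIndep hS hα q, reflBase_span hS hα q, ?_⟩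
    intro β hβ
    rcases hS.2.2.2 β hβ with h | h
    · by_cases hm : ∃ k : ℤ, 0 < k ∧ β = (k : ℝ) • α
      · obtain ⟨k, hk, rfl⟩ := hm
        right
        rw [show -((k : ℝ) • α) = (k : ℝ) • (-α) from (smul_neg _ _).symm]
        exact nic_smul_mem (Set.mem_insert _ _) (le_of_lt hk)
      · exact Or.inl (pos_to_refl hR hS hα q hq hβ h hm)
    · by_cases hm : ∃ k : ℤ, 0 < k ∧ (-β) = (k : ℝ) • α
      · obtain ⟨k, hk, hkb⟩ := hm
        left
        rw [show β = (k : ℝ) • (-α) by rw [smul_neg, ← hkb, neg_neg]]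
        exact nic_smul_mem (Set.mem_insert _ _) (le_of_lt hk)
      · exact Or.inr (pos_to_refl hR hS hα q hq (grs_neg_mem hR hβ) h hm)
  have hPsub : P ⊆ R := by
    intro v hv
    rcases hv with ⟨⟨hvR, _⟩, _⟩ | ⟨_, hvR⟩ <;> exact hvR
  have hpos : IsPositiveSystem R P := by
    refine ⟨hPsub, ?_, ?_, ?_⟩
    · intro u hu v hv huv
      rw [hPeq] at hu hv ⊢
      exact ⟨huv, nic_add hu.2 hv.2⟩
    · ext v
      constructor
      · intro hvR
        rcases hbase.2.2.2 v hvR with h | h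
        · exact Or.inl (by rw [hPeq]; exact ⟨hvR, h⟩)
        · refine Or.inr (Set.mem_neg.mpr ?_)
          rw [hPeq]
          exact ⟨grs_neg_mem hR hvR, h⟩
      · intro hv
        rcases hv with hv | hv
        · exact hPsub hv
        · have h1 : -v ∈ P := Set.mem_neg.mp hv
          have h2 : -v ∈ R := hPsub h1
          simpa using grs_neg_mem hR h2
    · ext v
      constructor
      · rintro ⟨h1, h2⟩
        rw [hPeq] at h1
        have h2' : -v ∈ posRoots R S' := by rw [← hPeq]; exact Set.mem_neg.mp h2
        have hz : ∀ s : ↥S', (baseBasis hbase).repr v s = 0 := by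
          intro s
          obtain ⟨m, hm⟩ := nic_repr hbase h1.2 s
          obtain ⟨m', hm'⟩ := nic_repr hbase h2'.2 s
          have hneg : -((baseBasis hbase).repr v s) = (m' : ℝ) := by
            rw [← Finsupp.neg_apply, ← map_neg]; exact hm'
          rw [hm] at hneg ⊢
          have hm0 : (0:ℝ) ≤ m := by positivity
          have hm'0 : (0:ℝ) ≤ m' := by positivity
          linarith
        exact repr_all_zero_eq_zero hbase hz
      · intro hv
        rw [Set.mem_singleton_iff] at hv
        subst hv
        have h0P : (0:V) ∈ P := by
          rw [hPeq]
          exact ⟨grs_zero_mem hR, nic_zero _⟩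
        exact ⟨h0P, Set.mem_neg.mpr (by simpa using h0P)⟩
  exact ⟨hpos, hbase, hPeq⟩
end

section
/- Let (R,V) be a generalized root system, S a base of R, and I ⊆ S. Let V_I be the linear span of I and π_I : V → V_I^⊥ the orthogonal projection onto the orthogonal complement of V_I. Then (π_I(R), V_I^⊥) is a generalized root system, and the set π_I(S) \ {0} = {π_I(α) : α ∈ S \ I} is a base of it. -/
open scoped RealInnerProductSpace

variable {V : Type*} [NormedAddCommGroup V] [InnerProductSpace ℝ V] [FiniteDimensional ℝ V]

set_option linter.unusedSectionVars false



/-- axioms of a GRS, as a standalone predicate -/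
def GRSAx (R : Set V) : Prop :=
  ∀ α ∈ R, ∀ β ∈ R,
    (⟪α, β⟫ < 0 → α + β ∈ R) ∧
    (0 < ⟪α, β⟫ → α - β ∈ R) ∧
    (⟪α, β⟫ = 0 → (α + β ∈ R ↔ α - β ∈ R))

lemma real_inner_self_pos' {x : V} (hx : x ≠ 0) : 0 < ⟪x, x⟫ :=
  lt_of_le_of_ne real_inner_self_nonneg (fun h => hx (inner_self_eq_zero.mp h.symm))

lemma GRSAx.zero_mem {R : Set V} (h : GRSAx R) {α : V} (hα : α ∈ R) : (0 : V) ∈ R := by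
  by_cases h0 : α = 0
  · rwa [h0] at hα
  · have := ((h α hα α hα).2.1 (real_inner_self_pos' h0))
    rwa [sub_self] at this

lemma GRSAx.neg_mem {R : Set V} (h : GRSAx R) {α : V} (hα : α ∈ R) : -α ∈ R := by
  have h0 : (0:V) ∈ R := h.zero_mem hα
  have := (h 0 h0 α hα).2.2 (inner_zero_left α)
  rw [zero_add, zero_sub] at this
  exact this.mp hα

/-- coefficient of x along a -/
noncomputable def tc (a x : V) : ℝ := ⟪x, a⟫ / ⟪a, a⟫

/-- projection away from the line through a -/
noncomputable def prj (a : V) : V →ₗ[ℝ] V where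
  toFun x := x - (⟪x, a⟫ / ⟪a, a⟫) • a
  map_add' x y := by
    show (x + y) - (⟪x + y, a⟫ / ⟪a, a⟫) • a = _
    rw [inner_add_left, add_div, add_smul]; abel
  map_smul' c x := by
    show (c • x) - (⟪c • x, a⟫ / ⟪a, a⟫) • a = _
    rw [real_inner_smul_left, RingHom.id_apply, smul_sub, mul_div_assoc, smul_smul]

lemma prj_apply (a x : V) : prj a x = x - tc a x • a := rfl

lemma inner_prj_right (a x y : V) : ⟪x, prj a y⟫ = ⟪x, y⟫ - tc a y * ⟪x, a⟫ := by
  rw [prj_apply, inner_sub_right, real_inner_smul_right]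

lemma inner_prj_self (a x : V) : ⟪prj a x, a⟫ = 0 := by
  by_cases h : a = 0
  · simp [h]
  · rw [prj_apply, inner_sub_left, real_inner_smul_left, tc,
      div_mul_cancel₀ _ (ne_of_gt (real_inner_self_pos' h)), sub_self]

lemma inner_self_prj (a x : V) : ⟪a, prj a x⟫ = 0 := by
  rw [real_inner_comm]; exact inner_prj_self a x

lemma tc_prj (a x : V) : tc a (prj a x) = 0 := by
  rw [tc, inner_prj_self, zero_div]

lemma prj_idem (a x : V) : prj a (prj a x) = prj a x := by
  rw [prj_apply a (prj a x), tc_prj, zero_smul, sub_zero]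

lemma prj_a (a : V) : prj a a = 0 := by
  by_cases h : a = 0
  · simp [h, prj_apply]
  · rw [prj_apply, tc, div_self (ne_of_gt (real_inner_self_pos' h)), one_smul, sub_self]

/-- key inner product decomposition -/
lemma inner_decomp (a x y : V) : ⟪x, y⟫ = ⟪prj a x, prj a y⟫ + tc a x * tc a y * ⟪a, a⟫ := by
  have hx : x = prj a x + tc a x • a := by rw [prj_apply]; abel
  conv_lhs => rw [hx]
  nth_rewrite 1 [show y = prj a y + tc a y • a by rw [prj_apply]; abel]
  rw [inner_add_left, inner_add_right, inner_add_right, real_inner_smul_left,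
    real_inner_smul_left, real_inner_smul_right, real_inner_smul_right,
    inner_prj_self, inner_self_prj]
  ring

lemma tc_pos_inner {a x : V} (h : 0 < tc a x) : 0 < ⟪x, a⟫ := by
  rcases lt_or_eq_of_le (real_inner_self_nonneg (x := a)) with hs | hs
  · have := (div_pos_iff).mp h
    rcases this with ⟨h1, _⟩ | ⟨_, h2⟩
    · exact h1
    · linarith
  · rw [tc, ← hs, div_zero] at h; linarith

lemma tc_neg_inner {a x : V} (h : tc a x < 0) : ⟪x, a⟫ < 0 := by
  rcases lt_or_eq_of_le (real_inner_self_nonneg (x := a)) with hs | hs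
  · have := (div_neg_iff).mp h
    rcases this with ⟨h1, h2⟩ | ⟨_, h2⟩
    · linarith
    · linarith
  · rw [tc, ← hs, div_zero] at h; linarith

lemma tc_sub_a {a x : V} (ha : (⟪a,a⟫ : ℝ) ≠ 0) : tc a (x - a) = tc a x - 1 := by
  rw [tc, inner_sub_left, sub_div, div_self ha, tc]

lemma tc_add_a {a x : V} (ha : (⟪a,a⟫ : ℝ) ≠ 0) : tc a (x + a) = tc a x + 1 := by
  rw [tc, inner_add_left, add_div, div_self ha, tc]

lemma prj_sub_a (a x : V) : prj a (x - a) = prj a x := by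
  rw [map_sub, prj_a, sub_zero]

lemma prj_add_a (a x : V) : prj a (x + a) = prj a x := by
  rw [map_add, prj_a, add_zero]

lemma tc_neg_a (a x : V) : tc (-a) x = - tc a x := by
  simp only [tc, inner_neg_right, inner_neg_left, neg_neg, neg_div, div_neg]

lemma prj_neg_a (a x : V) : prj (-a) x = prj a x := by
  rw [prj_apply, prj_apply, tc_neg_a, neg_smul, smul_neg, neg_neg]

section Descent
variable {R : Set V} {a : V}

lemma descend_aux (hax : GRSAx R) (ha : a ∈ R) :
    ∀ n : ℕ, ∀ γ ∈ R, |tc a γ| ≤ n + 1 →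
      ∃ γ' ∈ R, prj a γ' = prj a γ ∧ -1 < tc a γ' ∧ tc a γ' ≤ 0 := by
  intro n
  induction n with
  | zero =>
    intro γ hγ hb
    rcases le_or_gt (tc a γ) 0 with h0 | h0
    · rcases lt_or_ge (-1) (tc a γ) with h1 | h1
      · exact ⟨γ, hγ, rfl, h1, h0⟩
      · -- tc ≤ -1 ≤ ... and |tc| ≤ 1 so tc = -1
        have : tc a γ = -1 := by
          have := abs_le.mp hb; push_cast at this; linarith [this.1]
        have hne : (⟪a,a⟫:ℝ) ≠ 0 := by
          intro hz; rw [tc, hz, div_zero] at this; norm_num at this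
        have hmem : γ + a ∈ R := (hax γ hγ a ha).1 (tc_neg_inner (by rw [this]; norm_num))
        refine ⟨γ + a, hmem, prj_add_a a γ, ?_, ?_⟩ <;>
          rw [tc_add_a hne, this] <;> norm_num
    · -- 0 < tc ≤ 1
      have hle : tc a γ ≤ 1 := by have := abs_le.mp hb; push_cast at this; linarith [this.2]
      have hne : (⟪a,a⟫:ℝ) ≠ 0 := by
        intro hz; rw [tc, hz, div_zero] at h0; linarith
      have hmem : γ - a ∈ R := (hax γ hγ a ha).2.1 (tc_pos_inner h0)
      exact ⟨γ - a, hmem, prj_sub_a a γ, by rw [tc_sub_a hne]; linarith,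
        by rw [tc_sub_a hne]; linarith⟩
  | succ n ih =>
    intro γ hγ hb
    rcases le_or_gt (|tc a γ|) (n + 1) with hsmall | hbig
    · exact ih γ hγ hsmall
    · rcases le_or_gt (tc a γ) 0 with h0 | h0
      · -- tc ≤ -(n+1), in particular tc < 0: step up
        have htneg : tc a γ < 0 := by
          rcases abs_cases (tc a γ) with ⟨he, _⟩ | ⟨he, _⟩
          · push_cast at hbig; linarith
          · push_cast at hbig; linarith
        have hne : (⟪a,a⟫:ℝ) ≠ 0 := by
          intro hz; rw [tc, hz, div_zero] at htneg; linarith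
        have hmem : γ + a ∈ R := (hax γ hγ a ha).1 (tc_neg_inner htneg)
        have hb' : |tc a (γ + a)| ≤ (n : ℝ) + 1 := by
          rw [tc_add_a hne]
          rw [abs_le]; push_cast at hb ⊢
          have := abs_le.mp hb
          constructor <;> [linarith [this.1]; linarith]
        obtain ⟨γ', hγ', hp, h1, h2⟩ := ih (γ + a) hmem hb'
        exact ⟨γ', hγ', by rw [hp, prj_add_a], h1, h2⟩
      · have hne : (⟪a,a⟫:ℝ) ≠ 0 := by
          intro hz; rw [tc, hz, div_zero] at h0; linarith
        have hmem : γ - a ∈ R := (hax γ hγ a ha).2.1 (tc_pos_inner h0)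
        have hb' : |tc a (γ - a)| ≤ (n : ℝ) + 1 := by
          rw [tc_sub_a hne, abs_le]; push_cast at hb ⊢
          have := abs_le.mp hb
          constructor <;> [linarith [this.1]; linarith [this.2]]
        obtain ⟨γ', hγ', hp, h1, h2⟩ := ih (γ - a) hmem hb'
        exact ⟨γ', hγ', by rw [hp, prj_sub_a], h1, h2⟩

lemma descend (hax : GRSAx R) (ha : a ∈ R) {γ : V} (hγ : γ ∈ R) :
    ∃ γ' ∈ R, prj a γ' = prj a γ ∧ -1 < tc a γ' ∧ tc a γ' ≤ 0 := by
  refine descend_aux hax ha ⌈|tc a γ|⌉₊ γ hγ ?_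
  calc |tc a γ| ≤ ⌈|tc a γ|⌉₊ := Nat.le_ceil _
  _ ≤ (⌈|tc a γ|⌉₊ : ℝ) + 1 := by linarith

lemma ascend (hax : GRSAx R) (ha : a ∈ R) {γ : V} (hγ : γ ∈ R) :
    ∃ γ' ∈ R, prj a γ' = prj a γ ∧ 0 ≤ tc a γ' ∧ tc a γ' < 1 := by
  obtain ⟨γ', hγ', hp, h1, h2⟩ := descend hax (hax.neg_mem ha) hγ
  rw [prj_neg_a, prj_neg_a] at hp
  rw [tc_neg_a] at h1 h2
  exact ⟨γ', hγ', hp, by linarith, by linarith⟩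

end Descent

/-- A GRS relative to a subspace `W`. -/
def IsGRSOn (R : Set V) (W : Submodule ℝ V) : Prop :=
  R.Nonempty ∧ R.Finite ∧ R ⊆ ↑W ∧ Submodule.span ℝ R = W ∧ GRSAx R

section StepOne
variable {R : Set V} {W : Submodule ℝ V} {a : V}

/-- one-sided version of the third axiom for the projected set -/
lemma step_three (hax : GRSAx R) (ha : a ∈ R) :
    ∀ x ∈ prj a '' R, ∀ y ∈ prj a '' R, ⟪x, y⟫ = 0 → x + y ∈ prj a '' R →
      x - y ∈ prj a '' R := by
  rintro x ⟨α, hα, rfl⟩ y ⟨β, hβ, rfl⟩ h0 ⟨σ, hσ, hσp⟩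
  by_cases hy0 : prj a β = 0
  · rw [hy0, sub_zero]; exact ⟨α, hα, rfl⟩
  by_cases hx0 : prj a α = 0
  · rw [hx0, zero_sub, ← map_neg]; exact ⟨-β, hax.neg_mem hβ, rfl⟩
  obtain ⟨α', hα', hpα, hα1, hα2⟩ := descend hax ha hα
  obtain ⟨β', hβ', hpβ, hβ1, hβ2⟩ := descend hax ha hβ
  rcases eq_or_lt_of_le hβ2 with htβ | htβ
  · -- tc a β' = 0, so β' = prj a β
    have hβeq : β' = prj a β := by
      rw [← hpβ, prj_apply, htβ, zero_smul, sub_zero]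
    -- σ - β' ∈ R
    have hinner : 0 < ⟪σ, β'⟫ := by
      rw [inner_decomp a σ β', htβ, mul_zero, zero_mul, add_zero, hσp, hβeq, prj_idem,
        inner_add_left, h0, zero_add]
      exact real_inner_self_pos' hy0
    have hρ : σ - β' ∈ R := (hax σ hσ β' hβ').2.1 hinner
    have hpρ : prj a (σ - β') = prj a α := by
      rw [map_sub, hσp, hβeq, prj_idem]; abel
    -- ⟪σ - β', β'⟫ = 0
    have hz : ⟪σ - β', β'⟫ = 0 := by
      rw [inner_decomp a (σ - β') β', htβ, mul_zero, zero_mul, add_zero, hpρ, hβeq, prj_idem, h0]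
    have hiff := (hax (σ - β') hρ β' hβ').2.2 hz
    have hsum : σ - β' + β' ∈ R := by rw [sub_add_cancel]; exact hσ
    refine ⟨σ - β' - β', hiff.mp hsum, ?_⟩
    rw [map_sub, hpρ, hβeq, prj_idem]
  rcases eq_or_lt_of_le hα2 with htα | htα
  · -- tc a α' = 0, symmetric
    have hαeq : α' = prj a α := by
      rw [← hpα, prj_apply, htα, zero_smul, sub_zero]
    have hinner : 0 < ⟪σ, α'⟫ := by
      rw [inner_decomp a σ α', htα, mul_zero, zero_mul, add_zero, hσp, hαeq, prj_idem,
        inner_add_left, real_inner_comm (prj a α) (prj a β), h0, add_zero]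
      exact real_inner_self_pos' hx0
    have hρ : σ - α' ∈ R := (hax σ hσ α' hα').2.1 hinner
    have hpρ : prj a (σ - α') = prj a β := by
      rw [map_sub, hσp, hαeq, prj_idem]; abel
    have hz : ⟪α', σ - α'⟫ = 0 := by
      rw [inner_decomp a α' (σ - α'), htα, zero_mul, zero_mul, add_zero, hpρ, hαeq, prj_idem, h0]
    have hiff := (hax α' hα' (σ - α') hρ).2.2 hz
    have hsum : α' + (σ - α') ∈ R := by rw [add_sub_cancel]; exact hσ
    refine ⟨α' - (σ - α'), hiff.mp hsum, ?_⟩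
    rw [map_sub, hpρ, hαeq, prj_idem]
  · -- both tc < 0
    have hs : (0:ℝ) < ⟪a, a⟫ := by
      rcases lt_or_eq_of_le (real_inner_self_nonneg (x := a)) with h | h
      · exact h
      · exfalso; rw [tc, ← h, div_zero] at htα; linarith
    have hinner : 0 < ⟪α', β'⟫ := by
      rw [inner_decomp a α' β', hpα, hpβ, h0, zero_add]
      exact mul_pos (mul_pos_of_neg_of_neg htα htβ) hs
    refine ⟨α' - β', (hax α' hα' β' hβ').2.1 hinner, ?_⟩
    rw [map_sub, hpα, hpβ]

/-- Core step: projecting a relative GRS away from one of its roots. -/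
lemma step_one (h : IsGRSOn R W) (ha : a ∈ R) :
    IsGRSOn (prj a '' R) (W ⊓ (Submodule.span ℝ {a})ᗮ) := by
  obtain ⟨hne, hfin, hsub, hspan, hax⟩ := h
  have haW : a ∈ W := hsub ha
  have hsub' : prj a '' R ⊆ ↑(W ⊓ (Submodule.span ℝ {a})ᗮ) := by
    rintro x ⟨γ, hγ, rfl⟩
    refine Submodule.mem_inf.mpr ⟨?_, ?_⟩
    · rw [prj_apply]
      exact W.sub_mem (hsub hγ) (W.smul_mem _ haW)
    · exact Submodule.mem_orthogonal_singleton_iff_inner_right.mpr (inner_self_prj a γ)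
  refine ⟨hne.image _, hfin.image _, hsub', le_antisymm ?_ ?_, ?_⟩
  · rw [Submodule.span_le]; exact hsub'
  · intro x hx
    rw [Submodule.mem_inf] at hx
    have hx1 : x ∈ Submodule.span ℝ R := by rw [hspan]; exact hx.1
    have hxa : ⟪x, a⟫ = 0 := by
      have := (Submodule.mem_orthogonal _ x).mp hx.2 a (Submodule.mem_span_singleton_self a)
      rw [real_inner_comm]; exact this
    have hxfix : prj a x = x := by
      rw [prj_apply, tc, hxa, zero_div, zero_smul, sub_zero]
    have : prj a x ∈ Submodule.map (prj a) (Submodule.span ℝ R) := Submodule.mem_map_of_mem hx1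
    rw [← Submodule.span_image] at this
    rwa [hxfix] at this
  · -- axioms
    rintro x hx y hy
    obtain ⟨α, hα, rfl⟩ := hx
    obtain ⟨β, hβ, rfl⟩ := hy
    refine ⟨?_, ?_, ?_⟩
    · intro hneg
      obtain ⟨α', hα', hpα, hα1, hα2⟩ := descend hax ha hα
      obtain ⟨β', hβ', hpβ, hβ1, hβ2⟩ := ascend hax ha hβ
      have hinner : ⟪α', β'⟫ < 0 := by
        rw [inner_decomp a α' β', hpα, hpβ]
        nlinarith [mul_nonneg (mul_nonneg (neg_nonneg.mpr hα2) hβ1) (real_inner_self_nonneg (x := a)), hneg]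
      refine ⟨α' + β', (hax α' hα' β' hβ').1 hinner, ?_⟩
      rw [map_add, hpα, hpβ]
    · intro hpos
      obtain ⟨α', hα', hpα, hα1, hα2⟩ := descend hax ha hα
      obtain ⟨β', hβ', hpβ, hβ1, hβ2⟩ := descend hax ha hβ
      have hinner : 0 < ⟪α', β'⟫ := by
        rw [inner_decomp a α' β', hpα, hpβ]
        nlinarith [mul_nonneg (mul_nonneg (neg_nonneg.mpr hα2) (neg_nonneg.mpr hβ2)) (real_inner_self_nonneg (x := a)), hpos]
      refine ⟨α' - β', (hax α' hα' β' hβ').2.1 hinner, ?_⟩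
      rw [map_sub, hpα, hpβ]
    · intro h0
      constructor
      · exact step_three hax ha _ ⟨α, hα, rfl⟩ _ ⟨β, hβ, rfl⟩ h0
      · intro hsub2
        have hnegy : prj a (-β) = -(prj a β) := map_neg _ β
        have h0' : ⟪prj a α, prj a (-β)⟫ = 0 := by
          rw [hnegy, inner_neg_right, h0, neg_zero]
        have := step_three hax ha _ ⟨α, hα, rfl⟩ _ ⟨-β, hax.neg_mem hβ, rfl⟩ h0' ?_
        · rw [hnegy, sub_neg_eq_add] at this; exact this
        · rw [hnegy, ← sub_eq_add_neg]; exact hsub2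

end StepOne

section MainProj

lemma main_proj : ∀ n : ℕ, ∀ (J : Finset V) (R : Set V) (W : Submodule ℝ V),
    J.card ≤ n → IsGRSOn R W → (J : Set V) ⊆ R →
    ∃ q : V →ₗ[ℝ] V, (∀ x, x - q x ∈ Submodule.span ℝ (J : Set V)) ∧
      (∀ x, q x ∈ (Submodule.span ℝ (J : Set V))ᗮ) ∧
      IsGRSOn (q '' R) (W ⊓ (Submodule.span ℝ (J : Set V))ᗮ) := by
  intro n
  induction n with
  | zero =>
    intro J R W hcard h hJR
    classical
    have hJ : J = ∅ := Finset.card_eq_zero.mp (Nat.le_zero.mp hcard)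
    subst hJ
    refine ⟨LinearMap.id, ?_, ?_, ?_⟩
    · intro x; simp
    · intro x; simp
    · simpa using h
  | succ n ih =>
    intro J R W hcard h hJR
    classical
    rcases Finset.eq_empty_or_nonempty J with hJ | ⟨a, ha⟩
    · subst hJ
      refine ⟨LinearMap.id, ?_, ?_, ?_⟩
      · intro x; simp
      · intro x; simp
      · simpa using h
    · have haR : a ∈ R := hJR ha
      set J' : Finset V := J.erase a with hJ'def
      set J₁ : Finset V := J'.image (prj a) with hJ₁def
      have hR₁ : IsGRSOn (prj a '' R) (W ⊓ (Submodule.span ℝ {a})ᗮ) := step_one h haR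
      have hcard₁ : J₁.card ≤ n := by
        calc J₁.card ≤ J'.card := Finset.card_image_le
        _ = J.card - 1 := by rw [hJ'def, Finset.card_erase_of_mem ha]
        _ ≤ n := by omega
      have hJ₁sub : (J₁ : Set V) ⊆ prj a '' R := by
        intro x hx
        rw [hJ₁def] at hx
        simp only [Finset.coe_image, Set.mem_image] at hx
        obtain ⟨j, hj, rfl⟩ := hx
        exact ⟨j, hJR (Finset.erase_subset a J hj), rfl⟩
      obtain ⟨q', hq1, hq2, hgrs⟩ := ih J₁ (prj a '' R) (W ⊓ (Submodule.span ℝ {a})ᗮ)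
        hcard₁ hR₁ hJ₁sub
      -- basic span facts
      have haJ : a ∈ Submodule.span ℝ (J : Set V) :=
        Submodule.subset_span (by exact_mod_cast ha)
      have hJT : ∀ j ∈ (J : Set V), j ∈ Submodule.span ℝ (J : Set V) :=
        fun j hj => Submodule.subset_span hj
      have hspanJ₁_orth : Submodule.span ℝ (J₁ : Set V) ≤ (Submodule.span ℝ {a})ᗮ := by
        rw [Submodule.span_le]
        intro x hx
        rw [hJ₁def] at hx
        simp only [Finset.coe_image, Set.mem_image] at hx
        obtain ⟨j, _, rfl⟩ := hx
        exact Submodule.mem_orthogonal_singleton_iff_inner_right.mpr (inner_self_prj a j)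
      have hspanJ₁_le : Submodule.span ℝ (J₁ : Set V) ≤ Submodule.span ℝ (J : Set V) := by
        rw [Submodule.span_le]
        intro x hx
        rw [hJ₁def] at hx
        simp only [Finset.coe_image, Set.mem_image] at hx
        obtain ⟨j, hj, rfl⟩ := hx
        have hjJ : j ∈ Submodule.span ℝ (J : Set V) :=
          Submodule.subset_span (by exact_mod_cast (Finset.erase_subset a J hj))
        rw [prj_apply]
        exact Submodule.sub_mem _ hjJ (Submodule.smul_mem _ _ haJ)
      set q : V →ₗ[ℝ] V := q'.comp (prj a) with hqdef
      have hqa : ∀ x, ⟪q x, a⟫ = 0 := by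
        intro x
        have hu : prj a x - q' (prj a x) ∈ Submodule.span ℝ (J₁ : Set V) := hq1 (prj a x)
        have hu_orth : ⟪prj a x - q' (prj a x), a⟫ = 0 := by
          have := hspanJ₁_orth hu
          rw [Submodule.mem_orthogonal_singleton_iff_inner_right] at this
          rw [real_inner_comm]; exact this
        have : ⟪q' (prj a x), a⟫ = ⟪prj a x, a⟫ - ⟪prj a x - q' (prj a x), a⟫ := by
          rw [inner_sub_left]; ring
        rw [hqdef]; simp only [LinearMap.comp_apply]
        rw [this, hu_orth, inner_prj_self, sub_zero]
      have hq2' : ∀ x, q x ∈ (Submodule.span ℝ (J : Set V))ᗮ := by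
        intro x
        rw [Submodule.mem_orthogonal]
        intro u hu
        induction hu using Submodule.span_induction with
        | mem j hj =>
          rcases eq_or_ne j a with rfl | hja
          · rw [real_inner_comm]; exact hqa x
          · have hjJ' : j ∈ J' := by
              rw [hJ'def]; exact Finset.mem_erase.mpr ⟨hja, by exact_mod_cast hj⟩
            have hpj : prj a j ∈ Submodule.span ℝ (J₁ : Set V) := by
              apply Submodule.subset_span
              rw [hJ₁def]; simp only [Finset.coe_image, Set.mem_image]
              exact ⟨j, hjJ', rfl⟩
            have h1 : ⟪prj a j, q x⟫ = 0 := by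
              have := hq2 (prj a x)
              rw [Submodule.mem_orthogonal] at this
              have := this (prj a j) hpj
              rw [hqdef]; simpa using this
            have hdecomp : j = prj a j + tc a j • a := by rw [prj_apply]; abel
            rw [hdecomp, inner_add_left, h1, real_inner_smul_left, zero_add,
              real_inner_comm (q x) a, hqa x, mul_zero]
        | zero => exact inner_zero_left _
        | add u v _ _ hu hv => rw [inner_add_left, hu, hv, add_zero]
        | smul c u _ hu => rw [real_inner_smul_left, hu, mul_zero]
      have hq1' : ∀ x, x - q x ∈ Submodule.span ℝ (J : Set V) := by
        intro x
        have h1 : x - prj a x ∈ Submodule.span ℝ (J : Set V) := by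
          rw [prj_apply]
          have : x - (x - tc a x • a) = tc a x • a := by abel
          rw [this]
          exact Submodule.smul_mem _ _ haJ
        have h2 : prj a x - q' (prj a x) ∈ Submodule.span ℝ (J : Set V) :=
          hspanJ₁_le (hq1 (prj a x))
        have : x - q x = (x - prj a x) + (prj a x - q' (prj a x)) := by
          rw [hqdef]; simp only [LinearMap.comp_apply]; abel
        rw [this]
        exact Submodule.add_mem _ h1 h2
      -- equality of target subspaces
      have hWeq : W ⊓ (Submodule.span ℝ {a})ᗮ ⊓ (Submodule.span ℝ (J₁ : Set V))ᗮ
          = W ⊓ (Submodule.span ℝ (J : Set V))ᗮ := by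
        ext x
        simp only [Submodule.mem_inf]
        constructor
        · rintro ⟨⟨hxW, hxa⟩, hxJ₁⟩
          refine ⟨hxW, ?_⟩
          rw [Submodule.mem_orthogonal]
          intro u hu
          induction hu using Submodule.span_induction with
          | mem j hj =>
            rcases eq_or_ne j a with rfl | hja
            · exact (Submodule.mem_orthogonal _ x).mp hxa j
                (Submodule.mem_span_singleton_self j)
            · have hjJ' : j ∈ J' := by
                rw [hJ'def]; exact Finset.mem_erase.mpr ⟨hja, by exact_mod_cast hj⟩
              have hpj : prj a j ∈ Submodule.span ℝ (J₁ : Set V) := by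
                apply Submodule.subset_span
                rw [hJ₁def]; simp only [Finset.coe_image, Set.mem_image]
                exact ⟨j, hjJ', rfl⟩
              have h1 : ⟪prj a j, x⟫ = 0 :=
                (Submodule.mem_orthogonal _ x).mp hxJ₁ (prj a j) hpj
              have h2 : ⟪a, x⟫ = 0 :=
                (Submodule.mem_orthogonal _ x).mp hxa a (Submodule.mem_span_singleton_self a)
              have hdecomp : j = prj a j + tc a j • a := by rw [prj_apply]; abel
              rw [hdecomp, inner_add_left, h1, real_inner_smul_left, h2, mul_zero, add_zero]
          | zero => exact inner_zero_left _
          | add u v _ _ hu hv => rw [inner_add_left, hu, hv, add_zero]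
          | smul c u _ hu => rw [real_inner_smul_left, hu, mul_zero]
        · rintro ⟨hxW, hxJ⟩
          have hxa : x ∈ (Submodule.span ℝ {a})ᗮ := by
            rw [Submodule.mem_orthogonal]
            intro u hu
            rw [Submodule.mem_span_singleton] at hu
            obtain ⟨c, rfl⟩ := hu
            rw [real_inner_smul_left]
            have : ⟪a, x⟫ = 0 := (Submodule.mem_orthogonal _ x).mp hxJ a haJ
            rw [this, mul_zero]
          refine ⟨⟨hxW, hxa⟩, ?_⟩
          exact Submodule.orthogonal_le hspanJ₁_le hxJ
      refine ⟨q, hq1', hq2', ?_⟩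
      have himg : q '' R = q' '' (prj a '' R) := by
        rw [hqdef, ← Set.image_comp]; rfl
      rw [himg, ← hWeq]
      rw [inf_assoc] at hgrs ⊢
      exact hgrs

end MainProj


section Transfer
variable {R I : Set V}

lemma grs_main (hR : IsGRS R) (hfin : I.Finite) (hIR : I ⊆ R) :
    IsGRS (projAway I '' R) := by
  classical
  set U : Submodule ℝ V := Submodule.span ℝ I with hUdef
  have hGRSOn : IsGRSOn R ⊤ := ⟨hR.1, hR.2.1, fun x _ => trivial, by
      rw [hR.2.2.1], hR.2.2.2⟩
  obtain ⟨q, hq1, hq2, hgrs⟩ := main_proj hfin.toFinset.card hfin.toFinset R ⊤ le_rfl hGRSOn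
    (by rw [Set.Finite.coe_toFinset]; exact hIR)
  rw [Set.Finite.coe_toFinset] at hq1 hq2 hgrs
  have hproj : ∀ x : V, ((projAway I x : V)) = q x := by
    intro x
    apply Submodule.eq_starProjection_of_mem_orthogonal (hq2 x)
    exact Submodule.le_orthogonal_orthogonal U (hq1 x)
  have hmem_iff : ∀ z : ↥Uᗮ, (z ∈ projAway I '' R ↔ (z : V) ∈ q '' R) := by
    intro z
    constructor
    · rintro ⟨α, hα, rfl⟩; exact ⟨α, hα, (hproj α).symm⟩
    · rintro ⟨α, hα, hqα⟩
      refine ⟨α, hα, ?_⟩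
      apply Subtype.coe_injective
      show ((projAway I α : V)) = (z : V)
      rw [hproj α, hqα]
  obtain ⟨hne, hfin', _, hspan', hax'⟩ := hgrs
  refine ⟨hR.1.image _, hR.2.1.image _, ?_, ?_⟩
  · -- span = ⊤ in the subtype
    apply Submodule.map_injective_of_injective (Submodule.injective_subtype Uᗮ)
    rw [Submodule.map_top, Submodule.range_subtype]
    rw [← Submodule.span_image]
    have : (Uᗮ.subtype) '' (projAway I '' R) = q '' R := by
      ext v
      constructor
      · rintro ⟨z, hz, rfl⟩
        exact (hmem_iff z).mp hz
      · rintro ⟨α, hα, rfl⟩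
        exact ⟨projAway I α, ⟨α, hα, rfl⟩, hproj α⟩
    rw [this, hspan']
    rw [top_inf_eq] 
  · -- axioms
    intro x hx y hy
    have hx' : (x : V) ∈ q '' R := (hmem_iff x).mp hx
    have hy' : (y : V) ∈ q '' R := (hmem_iff y).mp hy
    have hax := hax' (x : V) hx' (y : V) hy'
    have hinner : ⟪x, y⟫ = ⟪(x : V), (y : V)⟫ := rfl
    refine ⟨?_, ?_, ?_⟩
    · intro hneg
      rw [hmem_iff (x + y)]
      push_cast
      exact hax.1 (by rw [← hinner]; exact hneg)
    · intro hpos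
      rw [hmem_iff (x - y)]
      push_cast
      exact hax.2.1 (by rw [← hinner]; exact hpos)
    · intro h0
      rw [hmem_iff (x + y), hmem_iff (x - y)]
      push_cast
      exact hax.2.2 (by rw [← hinner]; exact h0)

end Transfer


section BasePart
variable {R S I : Set V}

/-- the projection as a linear map -/
noncomputable def pS (I : Set V) : V →ₗ[ℝ] ↥((Submodule.span ℝ I)ᗮ) :=
  (Submodule.orthogonalProjectionOnto ((Submodule.span ℝ I)ᗮ)).toLinearMap

lemma pS_apply (I : Set V) (x : V) : pS I x = projAway I x := rfl

lemma ker_pS (I : Set V) : LinearMap.ker (pS I) = Submodule.span ℝ I := by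
  have : LinearMap.ker (pS I) = ((Submodule.span ℝ I)ᗮ)ᗮ := by
    ext x
    exact Submodule.orthogonalProjectionOnto_eq_zero_iff
  rw [this, Submodule.orthogonal_orthogonal]

lemma projAway_eq_zero_iff {x : V} : projAway I x = 0 ↔ x ∈ Submodule.span ℝ I := by
  constructor
  · intro h
    have : x ∈ LinearMap.ker (pS I) := by rw [LinearMap.mem_ker, pS_apply, h]
    rwa [ker_pS I] at this
  · intro h
    have : x ∈ LinearMap.ker (pS I) := by rw [ker_pS I]; exact h
    rw [LinearMap.mem_ker, pS_apply] at this; exact this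

/-- for α ∈ S, projAway I α = 0 iff α ∈ I -/
lemma projAway_zero_iff_mem (hSli : LinearIndependent ℝ ((↑) : S → V)) (hI : I ⊆ S)
    {α : V} (hα : α ∈ S) : projAway I α = 0 ↔ α ∈ I := by
  rw [projAway_eq_zero_iff]
  constructor
  · intro hmem
    by_contra hαI
    have hs : ({x : ↥S | (x : V) ∈ I} : Set ↥S) ⊆ Set.univ := Set.subset_univ _
    have himg : ((↑) : ↥S → V) '' {x : ↥S | (x : V) ∈ I} = I := by
      ext v
      constructor
      · rintro ⟨x, hx, rfl⟩; exact hx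
      · intro hv; exact ⟨⟨v, hI hv⟩, hv, rfl⟩
    have hns : (⟨α, hα⟩ : ↥S) ∉ ({x : ↥S | (x : V) ∈ I} : Set ↥S) := hαI
    have := hSli.notMem_span_image (s := {x : ↥S | (x : V) ∈ I}) hns
    rw [himg] at this
    exact this hmem
  · intro hmem; exact Submodule.subset_span hmem

lemma projAway_image_diff (hSli : LinearIndependent ℝ ((↑) : S → V)) (hI : I ⊆ S) :
    (projAway I '' S) \ {0} = projAway I '' (S \ I) := by
  ext z
  constructor
  · rintro ⟨⟨α, hα, rfl⟩, hz0⟩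
    simp only [Set.mem_singleton_iff] at hz0
    have : α ∉ I := fun hαI => hz0 ((projAway_zero_iff_mem hSli hI hα).mpr hαI)
    exact ⟨α, ⟨hα, this⟩, rfl⟩
  · rintro ⟨α, ⟨hα, hαI⟩, rfl⟩
    refine ⟨⟨α, hα, rfl⟩, ?_⟩
    simp only [Set.mem_singleton_iff]
    intro h0
    exact hαI ((projAway_zero_iff_mem hSli hI hα).mp h0)

lemma pS_zero_of_mem {x : V} (hx : x ∈ I) : pS I x = 0 := by
  rw [← LinearMap.mem_ker, ker_pS]
  exact Submodule.subset_span hx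

end BasePart

section BaseMain
variable {R S I : Set V}

lemma base_indep (hSli : LinearIndependent ℝ ((↑) : S → V)) (hI : I ⊆ S) :
    LinearIndependent ℝ ((↑) : ↥(projAway I '' (S \ I)) → ↥((Submodule.span ℝ I)ᗮ)) := by
  have hli1 : LinearIndependent ℝ ((↑) : ↥(S \ I) → V) :=
    LinearIndepOn.mono (v := id) hSli Set.diff_subset
  have hdisj : Disjoint (Submodule.span ℝ (S \ I)) (LinearMap.ker (pS I)) := by
    rw [ker_pS]
    have himgs : ((↑) : ↥S → V) '' {x : ↥S | (x : V) ∉ I} = S \ I := by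
      ext v
      constructor
      · rintro ⟨x, hx, rfl⟩; exact ⟨x.2, hx⟩
      · rintro ⟨hv, hvI⟩; exact ⟨⟨v, hv⟩, hvI, rfl⟩
    have himgt : ((↑) : ↥S → V) '' {x : ↥S | (x : V) ∈ I} = I := by
      ext v
      constructor
      · rintro ⟨x, hx, rfl⟩; exact hx
      · intro hv; exact ⟨⟨v, hI hv⟩, hv, rfl⟩
    have := hSli.disjoint_span_image (s := {x : ↥S | (x : V) ∉ I})
      (t := {x : ↥S | (x : V) ∈ I}) (by
        rw [Set.disjoint_iff]
        rintro x ⟨h1, h2⟩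
        exact h1 h2)
    rwa [himgs, himgt] at this
  have hmap : LinearIndependent ℝ ((pS I) ∘ ((↑) : ↥(S \ I) → V)) := by
    apply hli1.map
    rwa [Subtype.range_coe]
  have : LinearIndependent ℝ fun x : ↥(S \ I) => projAway I (x : V) := hmap
  have himg := LinearIndepOn.id_image (s := S \ I) (v := fun x : V => projAway I x) this
  have heq : (fun x : V => projAway I x) '' (S \ I) = projAway I '' (S \ I) := rfl
  rwa [heq] at himg

lemma base_span (hspan : Submodule.span ℝ S = ⊤) (hI : I ⊆ S) :
    Submodule.span ℝ (projAway I '' (S \ I)) = ⊤ := by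
  have hsurj : ∀ z : ↥((Submodule.span ℝ I)ᗮ), pS I (z : V) = z :=
    fun z => Submodule.orthogonalProjectionOnto_mem_subspace_eq_self z
  apply le_antisymm le_top
  intro z _
  have hz : (z : V) ∈ Submodule.span ℝ S := by rw [hspan]; trivial
  have : pS I (z : V) ∈ Submodule.map (pS I) (Submodule.span ℝ S) :=
    Submodule.mem_map_of_mem hz
  rw [← Submodule.span_image] at this
  rw [hsurj z] at this
  have hle : Submodule.span ℝ ((pS I) '' S) ≤ Submodule.span ℝ (projAway I '' (S \ I)) := by
    rw [Submodule.span_le]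
    rintro _ ⟨α, hα, rfl⟩
    by_cases hαI : α ∈ I
    · rw [pS_zero_of_mem hαI]
      exact Submodule.zero_mem _
    · exact Submodule.subset_span ⟨α, ⟨hα, hαI⟩, rfl⟩
  exact hle this

lemma base_coeff (hI : I ⊆ S) {γ : V} (hc : IsNonnegIntComb S γ) :
    IsNonnegIntComb (projAway I '' (S \ I)) (projAway I γ) := by
  classical
  obtain ⟨c, hsupp, hnn, hval⟩ := hc
  set c' : V →₀ ℤ := c.filter (fun α => α ∉ I) with hc'def
  set d : ↥((Submodule.span ℝ I)ᗮ) →₀ ℤ := Finsupp.mapDomain (projAway I) c' with hddef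
  have hc'supp : (c'.support : Set V) ⊆ S \ I := by
    intro a ha
    rw [hc'def, Finsupp.support_filter] at ha
    simp only [Finset.coe_filter, Set.mem_setOf_eq, Finset.mem_coe] at ha
    exact ⟨hsupp ha.1, ha.2⟩
  have hc'nn : ∀ a, 0 ≤ c' a := by
    intro a
    rw [hc'def, Finsupp.filter_apply]
    split
    · exact hnn a
    · exact le_refl 0
  refine ⟨d, ?_, ?_, ?_⟩
  · intro y hy
    rw [hddef] at hy
    have := Finsupp.mapDomain_support (f := projAway I) (s := c') hy
    simp only [Finset.mem_image] at this
    obtain ⟨a, ha, rfl⟩ := this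
    exact ⟨a, hc'supp ha, rfl⟩
  · intro y
    rw [hddef, Finsupp.mapDomain]
    rw [Finsupp.sum_apply]
    apply Finset.sum_nonneg
    intro a _
    show 0 ≤ (Finsupp.single (projAway I a) (c' a)) y
    rw [Finsupp.single_apply]
    split
    · exact hc'nn a
    · exact le_refl 0
  · rw [hddef]
    rw [Finsupp.sum_mapDomain_index (fun y => by rw [Int.cast_zero, zero_smul])
      (fun y n₁ n₂ => by rw [Int.cast_add, add_smul])]
    have hps : projAway I γ = pS I γ := rfl
    rw [hps, hval, map_finsuppSum]
    have hterm : (c.sum fun a n => pS I ((n : ℝ) • a)) = c.sum fun a n => (n : ℝ) • pS I a :=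
      Finsupp.sum_congr fun a _ => map_smul _ _ _
    rw [hterm]
    have hsplit := Finsupp.sum_filter_add_sum_filter_not (f := c) (p := fun α => α ∉ I)
      (fun a n => (n : ℝ) • pS I a)
    rw [← hsplit]
    have hzero : (c.filter (fun α => ¬ α ∉ I)).sum (fun a n => (n : ℝ) • pS I a) = 0 := by
      apply Finset.sum_eq_zero
      intro a ha
      rw [Finsupp.support_filter, Finset.mem_filter] at ha
      have haI : a ∈ I := not_not.mp ha.2
      show ((((Finsupp.filter (fun α => ¬ α ∉ I) c) a) : ℝ)) • pS I a = 0
      rw [pS_zero_of_mem haI, smul_zero]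
    rw [hzero, add_zero]
    rfl

lemma base_main (hR : IsGRS R) (hS : IsBase R S) (hI : I ⊆ S) :
    IsBase (projAway I '' R) (projAway I '' (S \ I)) := by
  obtain ⟨hSR, hSli, hSspan, hScoeff⟩ := hS
  refine ⟨?_, base_indep hSli hI, base_span hSspan hI, ?_⟩
  · exact Set.image_mono (fun x hx => hSR hx.1)
  · rintro _ ⟨γ, hγ, rfl⟩
    rcases hScoeff γ hγ with h | h
    · exact Or.inl (base_coeff hI h)
    · right
      have : -projAway I γ = projAway I (-γ) := by
        rw [← pS_apply, ← pS_apply, ← map_neg]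
      rw [this]
      exact base_coeff hI h

end BaseMain


/-- The quotient `(π_I(R), V_I^⊥)` is a GRS, and `π_I(S) \ {0}`, which
equals `{π_I(α) : α ∈ S \ I}`, is a base of it. -/
theorem stmt12 (R S I : Set V) (hR : IsGRS R) (hS : IsBase R S) (hI : I ⊆ S) :
    IsGRS (projAway I '' R) ∧
    (projAway I '' S) \ {0} = projAway I '' (S \ I) ∧
    IsBase (projAway I '' R) ((projAway I '' S) \ {0}) := by
  have hfinS : S.Finite := hR.2.1.subset hS.1
  have hfinI : I.Finite := hfinS.subset hI
  have hB := projAway_image_diff hS.2.1 hI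
  refine ⟨grs_main hR hfinI (fun x hx => hS.1 (hI hx)), hB, ?_⟩
  rw [hB]
  exact base_main hR hS hI
end
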